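/- arXiv:1303.0676 — 6 statements merged into one kernel-verified Lean document; each statement's English description precedes it below -/
import Mathlib

section
/- Let k be a natural number, p a natural number with p < k/(α-1) where α > 1, and f(z) = z^(-p) on the punctured unit disk. Then |f^(k)(z)|/(1 + |f(z)|^α) tends to ∞ as z → 0. -/
open Filter

/-- For `f(z) = z^(-p)` with `1 ≤ p < k/(α-1)` and `α > 1`, the quantity
`|f^(k)(z)| / (1 + |f(z)|^α)` tends to `∞` as `z → 0` in the punctured disk. -/
theorem stmt_2 (k p : ℕ) (hk : 1 ≤ k) (hp : 1 ≤ p) (α : ℝ) (hα : 1 < α)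
    (hpk : (p : ℝ) < (k : ℝ) / (α - 1)) :
    Tendsto (fun z : ℂ =>
        ‖iteratedDeriv k (fun w : ℂ => w ^ (-(p : ℤ))) z‖ /
          (1 + ‖z ^ (-(p : ℤ))‖ ^ α))
      (nhdsWithin 0 {0}ᶜ) atTop := by
  set C : ℝ := ‖∏ i ∈ Finset.range k, (((-(p : ℤ)) : ℂ) - i)‖ with hC
  have hCpos : 0 < C := by
    rw [hC, norm_pos_iff]
    apply Finset.prod_ne_zero_iff.mpr
    intro i _ h
    have h2 : ((p + i : ℕ) : ℂ) = 0 := by push_cast at h ⊢; linear_combination -h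
    have h3 : p + i = 0 := by exact_mod_cast h2
    omega
  set e : ℝ := (p : ℝ) * α - p - k with he
  have hα1 : 0 < α - 1 := by linarith
  have heneg : e < 0 := by
    have h1 : (p : ℝ) * (α - 1) < k := (lt_div_iff₀ hα1).mp hpk
    nlinarith
  -- the norm tends to 0 within (0, ∞)
  have hnorm : Tendsto (fun z : ℂ => ‖z‖) (nhdsWithin 0 {0}ᶜ)
      (nhdsWithin 0 (Set.Ioi (0:ℝ))) := by
    apply tendsto_nhdsWithin_of_tendsto_nhds_of_eventually_within
    · have : Tendsto (fun z : ℂ => ‖z‖) (nhds 0) (nhds ‖(0:ℂ)‖) :=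
        (continuous_norm.tendsto 0)
      simpa using this.mono_left nhdsWithin_le_nhds
    · filter_upwards [self_mem_nhdsWithin] with z hz
      exact Set.mem_Ioi.mpr (norm_pos_iff.mpr hz)
  have hinv : Tendsto (fun z : ℂ => ‖z‖⁻¹) (nhdsWithin 0 {0}ᶜ) atTop :=
    tendsto_inv_nhdsGT_zero.comp hnorm
  have hrp : Tendsto (fun z : ℂ => (‖z‖⁻¹) ^ (-e)) (nhdsWithin 0 {0}ᶜ) atTop :=
    (tendsto_rpow_atTop (by linarith : (0:ℝ) < -e)).comp hinv
  have hrp' : Tendsto (fun z : ℂ => ‖z‖ ^ e) (nhdsWithin 0 {0}ᶜ) atTop := by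
    apply hrp.congr'
    filter_upwards [self_mem_nhdsWithin] with z hz
    have h0 : (0:ℝ) < ‖z‖ := norm_pos_iff.mpr hz
    rw [Real.inv_rpow h0.le, Real.rpow_neg h0.le, inv_inv]
  have hL : Tendsto (fun z : ℂ => (C / 2) * ‖z‖ ^ e) (nhdsWithin 0 {0}ᶜ) atTop :=
    hrp'.const_mul_atTop (by linarith)
  apply tendsto_atTop_mono' _ _ hL
  have hlt1 : ∀ᶠ z : ℂ in nhdsWithin 0 {0}ᶜ, ‖z‖ < 1 := by
    have : ∀ᶠ z : ℂ in nhds 0, ‖z‖ < 1 := by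
      have := Metric.ball_mem_nhds (0:ℂ) one_pos
      filter_upwards [this] with z hz
      simpa [Metric.mem_ball, dist_zero_right] using hz
    exact this.filter_mono nhdsWithin_le_nhds
  filter_upwards [hlt1, self_mem_nhdsWithin] with z h1 hz
  have hr : (0:ℝ) < ‖z‖ := norm_pos_iff.mpr hz
  set r : ℝ := ‖z‖ with hrdef
  rw [iteratedDeriv_eq_iterate, iter_deriv_zpow, norm_mul, norm_zpow, norm_zpow,
    ← Real.rpow_intCast ‖z‖ (-(p:ℤ) - k), ← Real.rpow_intCast ‖z‖ (-(p:ℤ))]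
  push_cast at hC ⊢
  rw [← hC, ← Real.rpow_mul hr.le]
  -- now goal : C / 2 * r ^ e ≤ C * r ^ (-(p:ℝ) - k) / (1 + r ^ (-(p:ℝ) * α))
  have hB : (1:ℝ) ≤ r ^ (-(p:ℝ) * α) := by
    apply Real.one_le_rpow_of_pos_of_le_one_of_nonpos hr h1.le
    nlinarith [hp, hα]
  have hBpos : (0:ℝ) < r ^ (-(p:ℝ) * α) := Real.rpow_pos_of_pos hr _
  have key : C / 2 * r ^ e = C * r ^ (-(p:ℝ) - k) / (2 * r ^ (-(p:ℝ) * α)) := by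
    rw [show (-(p:ℝ) - k) = e + (-(p:ℝ) * α) by rw [he]; ring]
    rw [Real.rpow_add hr]
    field_simp
  rw [key]
  gcongr
  linarith
end

section
/- Let k be a natural number and 0 < α ≤ 1. For the functions f_n(z) = (z-3)^n on the unit disk, for every z in the unit disk the quantity |f_n^(k)(z)|/(1 + |f_n(z)|^α) tends to ∞ as n → ∞. -/
open Filter

lemma iterDeriv_aux (n k : ℕ) :
    iteratedDeriv k (fun w : ℂ => (w - 3) ^ n)
      = fun w : ℂ => (n.descFactorial k : ℂ) * (w - 3) ^ (n - k) := by
  induction k with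
  | zero => simp [iteratedDeriv_zero]
  | succ k ih =>
    rw [iteratedDeriv_succ, ih]
    funext w
    have hdiff : DifferentiableAt ℂ (fun w : ℂ => (w - 3) ^ (n - k)) w := by
      fun_prop
    rw [deriv_const_mul _ hdiff]
    have : deriv (fun w : ℂ => (w - 3) ^ (n - k)) w
        = ((n - k : ℕ) : ℂ) * (w - 3) ^ (n - k - 1) := by
      have h1 : HasDerivAt (fun w : ℂ => (w - 3) ^ (n - k))
          (((n - k : ℕ) : ℂ) * (w - 3) ^ (n - k - 1) * 1) w := by
        exact ((hasDerivAt_pow (n - k) (w - 3)).comp w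
          (((hasDerivAt_id w).sub_const 3)))
      simpa using h1.deriv
    rw [this, Nat.descFactorial_succ, show n - (k + 1) = n - k - 1 from by omega]
    push_cast
    ring

/-- For `f_n(z) = (z-3)^n` on the unit disk and `0 < α ≤ 1`, for every `z` in the unit
disk, `|f_n^(k)(z)| / (1 + |f_n(z)|^α) → ∞` as `n → ∞`. -/
theorem stmt_3 (k : ℕ) (hk : 1 ≤ k) (α : ℝ) (hα0 : 0 < α) (hα1 : α ≤ 1)
    (z : ℂ) (hz : z ∈ Metric.ball (0 : ℂ) 1) :
    Tendsto (fun n : ℕ =>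
        ‖iteratedDeriv k (fun w : ℂ => (w - 3) ^ n) z‖ /
          (1 + ‖(z - 3) ^ n‖ ^ α))
      atTop atTop := by
  set r : ℝ := ‖z - 3‖ with hr
  have hz1 : ‖z‖ < 1 := by simpa using hz
  have hr2 : (2 : ℝ) ≤ r := by
    have := norm_sub_norm_le (z - 3) z
    simp only [sub_sub_cancel_left, norm_neg] at this
    have h3 : ‖(3 : ℂ)‖ = 3 := by norm_num
    calc (2 : ℝ) ≤ 3 - ‖z‖ := by linarith
    _ ≤ r := by
        have := norm_add_le (z - 3) (-z)
        have h' : ‖(3:ℂ)‖ ≤ ‖z - 3‖ + ‖z‖ := by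
          calc ‖(3:ℂ)‖ = ‖(z - 3) - z‖ := by rw [show z - 3 - z = (-3 : ℂ) from by ring, norm_neg]
          _ ≤ ‖z - 3‖ + ‖z‖ := norm_sub_le _ _
        rw [h3] at h'; linarith
  have hr1 : (1 : ℝ) ≤ r := by linarith
  have hr0 : (0 : ℝ) < r := by linarith
  -- lower bound: for n ≥ k, term n ≥ (n - k + 1) / (2 * r^k)
  apply tendsto_atTop_mono' _
    (show ∀ᶠ n : ℕ in atTop,
      ((n : ℝ) - k + 1) / (2 * r ^ k)
        ≤ ‖iteratedDeriv k (fun w : ℂ => (w - 3) ^ n) z‖ / (1 + ‖(z - 3) ^ n‖ ^ α) from ?_)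
  · -- RHS tends to atTop
    have hc : (0 : ℝ) < 2 * r ^ k := by positivity
    have h1 : Tendsto (fun n : ℕ => (n : ℝ) + (1 - k)) atTop atTop :=
      tendsto_atTop_add_const_right _ _ tendsto_natCast_atTop_atTop
    exact (h1.atTop_div_const hc).congr (fun n => by ring_nf)
  · filter_upwards [eventually_ge_atTop k] with n hn
    have hnum : ‖iteratedDeriv k (fun w : ℂ => (w - 3) ^ n) z‖
        = (n.descFactorial k : ℝ) * r ^ (n - k) := by
      rw [iterDeriv_aux]
      simp [norm_mul, norm_pow, hr]
    have hden_pos : (0 : ℝ) < 1 + ‖(z - 3) ^ n‖ ^ α := by positivity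
    have hrn1 : (1 : ℝ) ≤ r ^ n := one_le_pow₀ hr1
    have hden_le : 1 + ‖(z - 3) ^ n‖ ^ α ≤ 2 * r ^ n := by
      have h1 : ‖(z - 3) ^ n‖ ^ α = (r ^ n) ^ α := by rw [norm_pow]
      have h2 : (r ^ n) ^ α ≤ (r ^ n) ^ (1 : ℝ) :=
        Real.rpow_le_rpow_of_exponent_le hrn1 hα1
      rw [Real.rpow_one] at h2
      rw [h1]; linarith
    -- descFactorial lower bound
    have hdf : (n : ℝ) - k + 1 ≤ (n.descFactorial k : ℝ) := by
      obtain ⟨k', rfl⟩ := Nat.exists_eq_add_of_le hk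
      rw [show 1 + k' = k' + 1 from by omega, Nat.descFactorial_succ]
      have hpos : 0 < n.descFactorial k' := by
        rw [Nat.pos_iff_ne_zero]
        intro h
        have := Nat.descFactorial_eq_zero_iff_lt.mp h
        omega
      have h2 : n - k' ≤ (n - k') * n.descFactorial k' :=
        Nat.le_mul_of_pos_right _ hpos
      calc (n : ℝ) - ↑(k' + 1) + 1 = ((n - k' : ℕ) : ℝ) := by
            have h : k' ≤ n := by omega
            push_cast [h]; ring
        _ ≤ (((n - k') * n.descFactorial k' : ℕ) : ℝ) := Nat.cast_le.mpr h2
    -- numerator lower bound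
    have hrnk : r ^ (n - k) = r ^ n / r ^ k := by
      rw [eq_div_iff (by positivity), ← pow_add]
      congr 1; omega
    rw [hnum, div_le_div_iff₀ (by positivity) hden_pos]
    calc ((n : ℝ) - k + 1) * (1 + ‖(z - 3) ^ n‖ ^ α)
        ≤ (n.descFactorial k : ℝ) * (2 * r ^ n) := by
          apply mul_le_mul hdf hden_le (le_of_lt hden_pos)
          positivity
      _ = (n.descFactorial k : ℝ) * r ^ (n - k) * (2 * r ^ k) := by
          rw [hrnk]; field_simp
end

section
/- For the function f_n(z) = (z-3)^n with n ≥ k, one has |f_n^(k)(z)|/(1 + |f_n(z)|^α) ≥ (1/2)(n-k)^k · |z-3|^(n(1-α)-k) for all z in the unit disk. -/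
lemma iteratedDeriv_sub_const_pow (c : ℂ) (n : ℕ) :
    ∀ k : ℕ, iteratedDeriv k (fun w : ℂ => (w - c) ^ n)
      = fun z => (n.descFactorial k : ℂ) * (z - c) ^ (n - k)
  | 0 => by simp [iteratedDeriv_zero]
  | (k + 1) => by
    rw [iteratedDeriv_succ, iteratedDeriv_sub_const_pow c n k]
    funext z
    have hd : HasDerivAt (fun z : ℂ => (n.descFactorial k : ℂ) * (z - c) ^ (n - k))
        ((n.descFactorial k : ℂ) * (((n - k : ℕ) : ℂ) * (z - c) ^ (n - k - 1))) z := by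
      have h1 : HasDerivAt (fun z : ℂ => z - c) 1 z := by
        simpa using (hasDerivAt_id z).sub_const c
      have h2 := (h1.pow (n - k))
      simpa using h2.const_mul ((n.descFactorial k : ℂ))
    rw [hd.deriv, Nat.descFactorial_succ, Nat.cast_mul, Nat.sub_sub]
    ring

/-- For `f_n(z) = (z-3)^n` with `n ≥ k`, `0 < α ≤ 1` and `z` in the unit disk,
`|f_n^(k)(z)| / (1 + |f_n(z)|^α) ≥ (1/2) (n-k)^k |z-3|^(n(1-α)-k)`. -/
theorem stmt_4 (k n : ℕ) (hk : 1 ≤ k) (hnk : k ≤ n) (α : ℝ) (hα0 : 0 < α) (hα1 : α ≤ 1)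
    (z : ℂ) (hz : z ∈ Metric.ball (0 : ℂ) 1) :
    (1 / 2) * ((n : ℝ) - k) ^ k * ‖z - 3‖ ^ ((n : ℝ) * (1 - α) - k) ≤
      ‖iteratedDeriv k (fun w : ℂ => (w - 3) ^ n) z‖ / (1 + ‖(z - 3) ^ n‖ ^ α) := by
  have hz1 : ‖z‖ < 1 := by simpa using hz
  set r : ℝ := ‖z - 3‖ with hr
  have hr2 : (2 : ℝ) ≤ r := by
    have h3 : ‖(3:ℂ)‖ - ‖z‖ ≤ ‖z - 3‖ := by
      rw [norm_sub_rev]; exact norm_sub_norm_le 3 z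
    have h4 : ‖(3:ℂ)‖ = 3 := by simp
    rw [hr]; linarith
  have hr0 : (0 : ℝ) < r := by linarith
  have hr1 : (1 : ℝ) ≤ r := by linarith
  rw [iteratedDeriv_sub_const_pow]
  have hD : ((n : ℝ) - k) ^ k ≤ (n.descFactorial k : ℝ) := by
    have h1 : (n - k) ^ k ≤ n.descFactorial k :=
      le_trans (Nat.pow_le_pow_left (by omega) k) (Nat.pow_sub_le_descFactorial n k)
    calc ((n : ℝ) - k) ^ k = ((n - k : ℕ) : ℝ) ^ k := by
          rw [Nat.cast_sub hnk]
      _ ≤ (n.descFactorial k : ℝ) := by exact_mod_cast (by exact_mod_cast h1 : ((n-k)^k : ℕ) ≤ _)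
  have hnorm : ‖(n.descFactorial k : ℂ) * (z - 3) ^ (n - k)‖
      = (n.descFactorial k : ℝ) * r ^ (n - k) := by
    rw [norm_mul, norm_pow, Complex.norm_natCast]
  have hnormn : ‖(z - 3) ^ n‖ ^ α = r ^ ((n : ℝ) * α) := by
    rw [norm_pow, ← Real.rpow_natCast r n, ← Real.rpow_mul hr0.le]
  rw [hnorm, hnormn]
  have hpow1 : (1 : ℝ) ≤ r ^ ((n : ℝ) * α) :=
    Real.one_le_rpow hr1 (by positivity)
  have hden : 1 + r ^ ((n : ℝ) * α) ≤ 2 * r ^ ((n : ℝ) * α) := by linarith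
  have hdenpos : (0 : ℝ) < 1 + r ^ ((n : ℝ) * α) := by positivity
  have key : (1 / 2) * ((n : ℝ) - k) ^ k * r ^ ((n : ℝ) * (1 - α) - k)
      ≤ ((n.descFactorial k : ℝ) * r ^ (n - k)) / (2 * r ^ ((n : ℝ) * α)) := by
    rw [div_mul_eq_div_div, le_div_iff₀ (by positivity)]
    have hexp : r ^ ((n : ℝ) * (1 - α) - k) * r ^ ((n : ℝ) * α) = r ^ (n - k : ℕ) := by
      rw [← Real.rpow_add hr0, ← Real.rpow_natCast r (n - k)]
      congr 1
      rw [Nat.cast_sub hnk]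
      ring
    calc (1 / 2) * ((n : ℝ) - k) ^ k * r ^ ((n : ℝ) * (1 - α) - k) * r ^ ((n : ℝ) * α)
        = ((n : ℝ) - k) ^ k * (r ^ ((n : ℝ) * (1 - α) - k) * r ^ ((n : ℝ) * α)) / 2 := by ring
      _ = ((n : ℝ) - k) ^ k * r ^ (n - k : ℕ) / 2 := by rw [hexp]
      _ ≤ (n.descFactorial k : ℝ) * r ^ (n - k : ℕ) / 2 := by
          gcongr
  refine key.trans ?_
  gcongr
end

section
/- Let s, r with 0 < r < s, a ∈ ℂ with |a| < s, and z with |z| = r. Then |s² - conj(a)·z| ≥ s(s - r), and consequently the (k-1)-st derivative of G_a'/G_a at z satisfies |(G_a'/G_a)^(k-1)(z)| ≤ (k-1)! · (1/(s-r)^k + 1/|z-a|^k). -/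
open Complex

lemma aux_iter (a : ℂ) (s : ℝ) (n : ℕ) :
    ∀ z : ℂ, (s : ℂ) ^ 2 - (starRingEnd ℂ) a * z ≠ 0 → z ≠ a →
    iteratedDeriv n (fun w : ℂ =>
       -(starRingEnd ℂ) a * ((s : ℂ) ^ 2 - (starRingEnd ℂ) a * w)⁻¹ - (w - a)⁻¹) z
    = (n.factorial : ℂ) * (-((starRingEnd ℂ) a) ^ (n + 1) *
        (((s : ℂ) ^ 2 - (starRingEnd ℂ) a * z) ^ (n + 1))⁻¹ +
        (-1) ^ (n + 1) * ((z - a) ^ (n + 1))⁻¹) := by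
  induction n with
  | zero =>
    intro z hN hza
    simp [iteratedDeriv_zero]
    ring
  | succ n ih =>
    intro z hN hza
    rw [iteratedDeriv_succ]
    have hcont : ContinuousAt (fun w : ℂ => (s : ℂ) ^ 2 - (starRingEnd ℂ) a * w) z :=
      (continuous_const.sub (continuous_const.mul continuous_id)).continuousAt
    have h1 : ∀ᶠ w in nhds z, (s : ℂ) ^ 2 - (starRingEnd ℂ) a * w ≠ 0 :=
      hcont.eventually_ne hN
    have h2 : ∀ᶠ w in nhds z, w ≠ a := eventually_ne_nhds hza
    have hev : iteratedDeriv n (fun w : ℂ =>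
        -(starRingEnd ℂ) a * ((s : ℂ) ^ 2 - (starRingEnd ℂ) a * w)⁻¹ - (w - a)⁻¹)
        =ᶠ[nhds z] fun w => (n.factorial : ℂ) * (-((starRingEnd ℂ) a) ^ (n + 1) *
          (((s : ℂ) ^ 2 - (starRingEnd ℂ) a * w) ^ (n + 1))⁻¹ +
          (-1) ^ (n + 1) * ((w - a) ^ (n + 1))⁻¹) :=
      (h1.and h2).mono fun w hw => ih w hw.1 hw.2
    rw [hev.deriv_eq]
    -- compute the derivative of the explicit function
    have hNd : HasDerivAt (fun w : ℂ => (s : ℂ) ^ 2 - (starRingEnd ℂ) a * w)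
        (-(starRingEnd ℂ) a) z := by
      simpa using (hasDerivAt_const z ((s:ℂ)^2)).fun_sub ((hasDerivAt_id z).const_mul ((starRingEnd ℂ) a))
    have hA : HasDerivAt (fun w : ℂ => (((s : ℂ) ^ 2 - (starRingEnd ℂ) a * w) ^ (n + 1))⁻¹)
        (-((n+1 : ℕ) * ((s : ℂ) ^ 2 - (starRingEnd ℂ) a * z) ^ n * (-(starRingEnd ℂ) a)) /
          (((s : ℂ) ^ 2 - (starRingEnd ℂ) a * z) ^ (n + 1)) ^ 2) z := by
      have := (hNd.fun_pow (n+1)).fun_inv (pow_ne_zero (n+1) hN)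
      simpa using this
    have hB : HasDerivAt (fun w : ℂ => ((w - a) ^ (n + 1))⁻¹)
        (-((n+1 : ℕ) * (z - a) ^ n * 1) / ((z - a) ^ (n + 1)) ^ 2) z := by
      have hsub : HasDerivAt (fun w : ℂ => w - a) 1 z := by
        simpa using (hasDerivAt_id z).sub_const a
      have := (hsub.fun_pow (n+1)).fun_inv (pow_ne_zero (n+1) (sub_ne_zero.mpr hza))
      simpa using this
    have htot := ((hA.const_mul ((n.factorial : ℂ) * (-((starRingEnd ℂ) a) ^ (n + 1)))).fun_add
      (hB.const_mul ((n.factorial : ℂ) * (-1) ^ (n + 1))))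
    have hderiv : deriv (fun w => (n.factorial : ℂ) * (-((starRingEnd ℂ) a) ^ (n + 1) *
          (((s : ℂ) ^ 2 - (starRingEnd ℂ) a * w) ^ (n + 1))⁻¹ +
          (-1) ^ (n + 1) * ((w - a) ^ (n + 1))⁻¹)) z = _ := HasDerivAt.deriv (by
      convert htot using 2 with w
      ring)
    rw [hderiv]
    have hza' : z - a ≠ 0 := sub_ne_zero.mpr hza
    rw [Nat.factorial_succ]
    push_cast
    field_simp
    ring

/-- For `0 < r < s`, `|a| < s` and `|z| = r`, `z ≠ a`, one has
`|s² - conj(a)z| ≥ s(s-r)` and the `(k-1)`-st derivative of the logarithmic derivative of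
`G_a(z) = (s² - conj(a)z)/(s(z-a))` is bounded by `(k-1)! (1/(s-r)^k + 1/|z-a|^k)`. -/
theorem stmt_6 (s r : ℝ) (hr : 0 < r) (hrs : r < s) (a : ℂ) (ha : ‖a‖ < s)
    (k : ℕ) (hk : 1 ≤ k) (z : ℂ) (hz : ‖z‖ = r) (hza : z ≠ a) :
    s * (s - r) ≤ ‖(s : ℂ) ^ 2 - (starRingEnd ℂ) a * z‖ ∧
    ‖iteratedDeriv (k - 1)
        (fun w : ℂ =>
          deriv (fun u : ℂ => ((s : ℂ) ^ 2 - (starRingEnd ℂ) a * u) / ((s : ℂ) * (u - a))) w /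
            (((s : ℂ) ^ 2 - (starRingEnd ℂ) a * w) / ((s : ℂ) * (w - a)))) z‖ ≤
      ((k - 1).factorial : ℝ) * (1 / (s - r) ^ k + 1 / ‖z - a‖ ^ k) := by
  have hs : 0 < s := hr.trans hrs
  have hsr : 0 < s - r := sub_pos.mpr hrs
  -- Part 1
  have hlow : ∀ w : ℂ, ‖w‖ = r → s * (s - r) ≤ ‖(s : ℂ) ^ 2 - (starRingEnd ℂ) a * w‖ := by
    intro w hw
    have h1 : ‖((s : ℂ) ^ 2)‖ - ‖(starRingEnd ℂ) a * w‖ ≤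
        ‖(s : ℂ) ^ 2 - (starRingEnd ℂ) a * w‖ := norm_sub_norm_le _ _
    have e1 : ‖((s : ℂ) ^ 2)‖ = s ^ 2 := by
      rw [norm_pow, Complex.norm_real, Real.norm_eq_abs, abs_of_pos hs]
    have e2 : ‖(starRingEnd ℂ) a * w‖ = ‖a‖ * r := by
      rw [norm_mul, RCLike.norm_conj, hw]
    rw [e1, e2] at h1
    nlinarith [norm_nonneg a]
  refine ⟨hlow z hz, ?_⟩
  obtain ⟨n, rfl⟩ : ∃ n, k = n + 1 := ⟨k - 1, (Nat.succ_pred_eq_of_pos hk).symm⟩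
  simp only [Nat.add_sub_cancel]
  have hN : (s : ℂ) ^ 2 - (starRingEnd ℂ) a * z ≠ 0 := by
    intro h
    have := hlow z hz
    rw [h, norm_zero] at this
    nlinarith
  have hs0 : (s : ℂ) ≠ 0 := by exact_mod_cast ne_of_gt hs
  have hcont : ContinuousAt (fun w : ℂ => (s : ℂ) ^ 2 - (starRingEnd ℂ) a * w) z :=
    (continuous_const.sub (continuous_const.mul continuous_id)).continuousAt
  have h1 : ∀ᶠ w in nhds z, (s : ℂ) ^ 2 - (starRingEnd ℂ) a * w ≠ 0 := hcont.eventually_ne hN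
  have h2 : ∀ᶠ w in nhds z, w ≠ a := eventually_ne_nhds hza
  have hev : (fun w : ℂ =>
        deriv (fun u : ℂ => ((s : ℂ) ^ 2 - (starRingEnd ℂ) a * u) / ((s : ℂ) * (u - a))) w /
          (((s : ℂ) ^ 2 - (starRingEnd ℂ) a * w) / ((s : ℂ) * (w - a))))
      =ᶠ[nhds z] (fun w : ℂ =>
        -(starRingEnd ℂ) a * ((s : ℂ) ^ 2 - (starRingEnd ℂ) a * w)⁻¹ - (w - a)⁻¹) := by
    refine (h1.and h2).mono fun w hw => ?_
    have hwa : w - a ≠ 0 := sub_ne_zero.mpr hw.2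
    have hDne : (s : ℂ) * (w - a) ≠ 0 := mul_ne_zero hs0 hwa
    have hNd : HasDerivAt (fun u : ℂ => (s : ℂ) ^ 2 - (starRingEnd ℂ) a * u)
        (-(starRingEnd ℂ) a) w := by
      simpa using (hasDerivAt_const w ((s:ℂ)^2)).fun_sub
        ((hasDerivAt_id w).const_mul ((starRingEnd ℂ) a))
    have hDd : HasDerivAt (fun u : ℂ => (s : ℂ) * (u - a)) (s : ℂ) w := by
      simpa using ((hasDerivAt_id w).sub_const a).const_mul (s : ℂ)
    have hG := (hNd.fun_div hDd hDne).deriv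
    have hNw : (s : ℂ) ^ 2 - (starRingEnd ℂ) a * w ≠ 0 := hw.1
    dsimp only
    rw [hG]
    field_simp
  rw [hev.iteratedDeriv_eq n, aux_iter a s n z hN hza]
  rw [norm_mul, Complex.norm_natCast]
  have hNnorm : 0 < ‖(s : ℂ) ^ 2 - (starRingEnd ℂ) a * z‖ := norm_pos_iff.mpr hN
  have hzanorm : 0 < ‖z - a‖ := norm_pos_iff.mpr (sub_ne_zero.mpr hza)
  have key : ‖-((starRingEnd ℂ) a) ^ (n + 1) *
        (((s : ℂ) ^ 2 - (starRingEnd ℂ) a * z) ^ (n + 1))⁻¹ +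
        (-1 : ℂ) ^ (n + 1) * ((z - a) ^ (n + 1))⁻¹‖ ≤
      1 / (s - r) ^ (n + 1) + 1 / ‖z - a‖ ^ (n + 1) := by
    refine (norm_add_le _ _).trans ?_
    have e1 : ‖-((starRingEnd ℂ) a) ^ (n + 1) *
        (((s : ℂ) ^ 2 - (starRingEnd ℂ) a * z) ^ (n + 1))⁻¹‖ =
        ‖a‖ ^ (n + 1) / ‖(s : ℂ) ^ 2 - (starRingEnd ℂ) a * z‖ ^ (n + 1) := by
      rw [norm_mul, norm_neg, norm_pow, RCLike.norm_conj, norm_inv, norm_pow, div_eq_mul_inv]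
    have e2 : ‖(-1 : ℂ) ^ (n + 1) * ((z - a) ^ (n + 1))⁻¹‖ = 1 / ‖z - a‖ ^ (n + 1) := by
      rw [norm_mul, norm_pow, norm_neg, norm_one, one_pow, one_mul, norm_inv, norm_pow,
        one_div]
    rw [e1, e2]
    gcongr ?_ + _
    have hb : (s * (s - r)) ^ (n + 1) ≤
        ‖(s : ℂ) ^ 2 - (starRingEnd ℂ) a * z‖ ^ (n + 1) :=
      pow_le_pow_left₀ (by positivity) (hlow z hz) _
    have ht : ‖a‖ ^ (n + 1) ≤ s ^ (n + 1) := pow_le_pow_left₀ (norm_nonneg a) ha.le _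
    calc ‖a‖ ^ (n + 1) / ‖(s : ℂ) ^ 2 - (starRingEnd ℂ) a * z‖ ^ (n + 1)
        ≤ s ^ (n + 1) / (s * (s - r)) ^ (n + 1) := by
          apply div_le_div₀ (by positivity) ht (by positivity) hb
      _ = 1 / (s - r) ^ (n + 1) := by
          rw [mul_pow]
          field_simp
  calc (n.factorial : ℝ) * ‖_‖ ≤ (n.factorial : ℝ) *
      (1 / (s - r) ^ (n + 1) + 1 / ‖z - a‖ ^ (n + 1)) := by
        exact mul_le_mul_of_nonneg_left key (by positivity)
    _ = _ := by norm_num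
end

section
/- Let D be a domain in ℂ, k and m natural numbers, and {g_n} a sequence of holomorphic functions on D, none identically zero, all of whose zeros have multiplicity at least m. If g_n converges to 0 locally uniformly on D, then the holomorphic functions (g_n^(k))^m / g_n^(m-k) converge to 0 locally uniformly on D. -/
open Filter Metric Complex Set Function intervalIntegral


/-- Crude Cauchy-type estimate for iterated derivatives at the center of a ball. -/
lemma crude_cauchy (j : ℕ) : ∃ A : ℝ, 0 < A ∧ ∀ (f : ℂ → ℂ) (c : ℂ) (ρ S : ℝ), 0 < ρ →
    DifferentiableOn ℂ f (ball c ρ) → (∀ z ∈ ball c ρ, ‖f z‖ ≤ S) →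
    ‖iteratedDeriv j f c‖ ≤ A * S / ρ ^ j := by
  induction j with
  | zero =>
    refine ⟨1, one_pos, fun f c ρ S hρ hf hS => ?_⟩
    simpa using hS c (mem_ball_self hρ)
  | succ j ih =>
    obtain ⟨A, hA, hAle⟩ := ih
    refine ⟨A * 2 ^ j * 4, by positivity, fun f c ρ S hρ hf hS => ?_⟩
    have hS0 : 0 ≤ S := le_trans (norm_nonneg _) (hS c (mem_ball_self hρ))
    have hd : DifferentiableOn ℂ (deriv f) (ball c ρ) :=
      ((hf.analyticOnNhd isOpen_ball).deriv).differentiableOn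
    have hDb : ∀ z ∈ ball c (ρ / 2), ‖deriv f z‖ ≤ 4 * S / ρ := by
      intro z hz
      have hsub : closedBall z (ρ / 4) ⊆ ball c ρ := by
        intro y hy
        have h1 : dist y z ≤ ρ / 4 := mem_closedBall.mp hy
        have h2 : dist z c < ρ / 2 := mem_ball.mp hz
        have : dist y c < ρ := by
          calc dist y c ≤ dist y z + dist z c := dist_triangle _ _ _
            _ < ρ / 4 + ρ / 2 := by linarith
            _ ≤ ρ := by linarith
        exact mem_ball.mpr this
      have hcl : DiffContOnCl ℂ f (ball z (ρ / 4)) := by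
        apply DifferentiableOn.diffContOnCl
        rw [closure_ball z (by positivity : (ρ/4) ≠ 0)]
        exact hf.mono hsub
      have := norm_deriv_le_of_forall_mem_sphere_norm_le (by positivity : (0:ℝ) < ρ/4) hcl
        (fun y hy => hS y (hsub (sphere_subset_closedBall hy)))
      calc ‖deriv f z‖ ≤ S / (ρ / 4) := this
        _ = 4 * S / ρ := by field_simp
    have := hAle (deriv f) c (ρ / 2) (4 * S / ρ) (by positivity)
      (hd.mono (ball_subset_ball (by linarith))) hDb
    rw [iteratedDeriv_succ']
    calc ‖iteratedDeriv j (deriv f) c‖ ≤ A * (4 * S / ρ) / (ρ / 2) ^ j := this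
      _ = A * 2 ^ j * 4 * S / ρ ^ (j + 1) := by
          rw [div_pow]
          field_simp
          ring


/-- Coefficients of the power series of `f` at `a` vanish when the corresponding
iterated derivatives vanish. -/
lemma coeff_eq_zero_of_iteratedDeriv {f : ℂ → ℂ} {p : FormalMultilinearSeries ℂ ℂ ℂ} {a : ℂ}
    (hp : HasFPowerSeriesAt f p a) (j : ℕ) (h : iteratedDeriv j f a = 0) : p.coeff j = 0 := by
  obtain ⟨r, hr⟩ := hp
  have h1 := hr.factorial_smul (1 : ℂ) j
  have h2 : iteratedFDeriv ℂ j f a (fun _ => 1) = iteratedDeriv j f a := by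
    rw [iteratedDeriv_eq_iteratedFDeriv]
  rw [h2, h] at h1
  have : (j.factorial : ℂ) * p.coeff j = 0 := by
    have : (j.factorial : ℂ) * p.coeff j = j.factorial • (p j) fun _ => 1 := by
      rw [FormalMultilinearSeries.coeff, nsmul_eq_mul]; rfl
    rw [this, h1]
  have hj : (j.factorial : ℂ) ≠ 0 := Nat.cast_ne_zero.mpr (Nat.factorial_ne_zero j)
  exact (mul_eq_zero.mp this).resolve_left hj

/-- Factorization lemma: if `f` is holomorphic on a ball and its derivatives up to order `m-1`
vanish at the center, then `f z = (z-a)^m * q z` with `q` holomorphic on the ball. -/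
lemma exists_factor_pow {f : ℂ → ℂ} {a : ℂ} {R : ℝ} (hR : 0 < R)
    (hf : DifferentiableOn ℂ f (ball a R)) (m : ℕ)
    (hva : ∀ j < m, iteratedDeriv j f a = 0) :
    ∃ q : ℂ → ℂ, DifferentiableOn ℂ q (ball a R) ∧
      ∀ z ∈ ball a R, f z = (z - a) ^ m * q z := by
  have hmem : ball a R ∈ nhds a := isOpen_ball.mem_nhds (mem_ball_self hR)
  have hA : AnalyticAt ℂ f a := hf.analyticAt hmem
  obtain ⟨p, hp⟩ := hA
  -- values of the iterated dslope at a
  have hval : ∀ j, ((swap dslope a)^[j] f) a = p.coeff j := by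
    intro j
    have h1 := hp.has_fpower_series_iterate_dslope_fslope j
    have h2 := h1.coeff_zero (fun _ => 1)
    have h3 : (FormalMultilinearSeries.fslope^[j] p).coeff 0 = ((swap dslope a)^[j] f) a := h2
    rw [FormalMultilinearSeries.coeff_iterate_fslope, zero_add] at h3
    exact h3.symm
  have hvalz : ∀ j < m, ((swap dslope a)^[j] f) a = 0 := by
    intro j hj
    rw [hval j]
    exact coeff_eq_zero_of_iteratedDeriv hp j (hva j hj)
  -- differentiability of iterated dslopes
  have hdiff : ∀ j, DifferentiableOn ℂ ((swap dslope a)^[j] f) (ball a R) := by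
    intro j
    induction j with
    | zero => exact hf
    | succ j ih =>
      rw [iterate_succ_apply']
      exact (differentiableOn_dslope hmem).mpr ih
  refine ⟨(swap dslope a)^[m] f, hdiff m, ?_⟩
  -- the factorization, by induction
  have key : ∀ j ≤ m, ∀ z, f z = (z - a) ^ j * ((swap dslope a)^[j] f) z := by
    intro j hj
    induction j with
    | zero => intro z; simp
    | succ j ih =>
      intro z
      have hj' : j < m := lt_of_lt_of_le (Nat.lt_succ_self j) hj
      have h1 := ih (le_of_lt hj') z
      have h2 : (z - a) • dslope ((swap dslope a)^[j] f) a z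
          = ((swap dslope a)^[j] f) z - ((swap dslope a)^[j] f) a :=
        sub_smul_dslope _ a z
      rw [hvalz j hj', sub_zero] at h2
      rw [iterate_succ_apply']
      have : ((swap dslope a)^[j] f) z = (z - a) * (swap dslope a) ((swap dslope a)^[j] f) z := by
        rw [← h2]; rfl
      rw [h1, this, pow_succ]
      ring
  exact fun z _ => key m le_rfl z


lemma exists_pow_root {f : ℂ → ℂ} {c : ℂ} {ρ : ℝ} (hρ : 0 < ρ)
    (hf : DifferentiableOn ℂ f (ball c ρ)) (hnz : ∀ z ∈ ball c ρ, f z ≠ 0)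
    (m : ℕ) (hm : 1 ≤ m) :
    ∃ u : ℂ → ℂ, DifferentiableOn ℂ u (ball c ρ) ∧ ∀ z ∈ ball c ρ, u z ^ m = f z := by
  have hco : c ∈ ball c ρ := mem_ball_self hρ
  have hfc : f c ≠ 0 := hnz c hco
  set φ : ℂ → ℂ := fun z => deriv f z / f z with hφ
  have hφd : DifferentiableOn ℂ φ (ball c ρ) :=
    ((hf.analyticOnNhd isOpen_ball).deriv.differentiableOn).div hf hnz
  have hφc : ContinuousOn φ (ball c ρ) := hφd.continuousOn
  set L : ℂ → ℂ := fun z =>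
    Complex.log (f c) + ∫ t in (0:ℝ)..1, (z - c) * φ (c + t • (z - c)) with hL
  -- Step 1 : exp (L z) = f z on the ball
  have hexp : ∀ z ∈ ball c ρ, Complex.exp (L z) = f z := by
    intro z hz
    rcases eq_or_ne z c with rfl | hzc
    · simp only [hL, sub_self, zero_mul, intervalIntegral.integral_zero, add_zero]
      exact Complex.exp_log hfc
    · set v : ℂ := z - c with hv
      have hvne : v ≠ 0 := sub_ne_zero.mpr hzc
      have hvnorm : ‖v‖ < ρ := by simpa [hv, ← dist_eq_norm] using mem_ball.mp hz
      have hvpos : 0 < ‖v‖ := norm_pos_iff.mpr hvne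
      set T : ℝ := ρ / ‖v‖ with hT
      have hT1 : 1 < T := (one_lt_div hvpos).mpr hvnorm
      set J : Set ℝ := Ioo (-T) T with hJ
      have hJopen : IsOpen J := isOpen_Ioo
      have h0J : (0:ℝ) ∈ J := ⟨by linarith, by linarith⟩
      have h1J : (1:ℝ) ∈ J := ⟨by linarith, hT1⟩
      set γ : ℝ → ℂ := fun s => c + s • v with hγ
      have hγmem : ∀ s ∈ J, γ s ∈ ball c ρ := by
        intro s hs
        have habs : |s| < T := abs_lt.mpr ⟨hs.1, hs.2⟩
        have : dist (γ s) c = |s| * ‖v‖ := by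
          simp [hγ, dist_eq_norm, norm_smul, Real.norm_eq_abs]
        rw [mem_ball, this]
        calc |s| * ‖v‖ < T * ‖v‖ := by
              exact mul_lt_mul_of_pos_right habs hvpos
          _ = ρ := div_mul_cancel₀ ρ (ne_of_gt hvpos)
      set ι : ℝ → ℂ := fun t => v * φ (γ t) with hι
      have hγcont : Continuous γ := by fun_prop
      have hιcont : ContinuousOn ι J := by
        apply ContinuousOn.mul continuousOn_const
        exact hφc.comp hγcont.continuousOn (fun s hs => hγmem s hs)
      set ψ : ℝ → ℂ := fun s => ∫ t in (0:ℝ)..s, ι t with hψdef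
      have hψ : ∀ s ∈ J, HasDerivAt ψ (ι s) s := by
        intro s hs
        have hsub : uIcc (0:ℝ) s ⊆ J := (ordConnected_Ioo.uIcc_subset h0J hs)
        refine intervalIntegral.integral_hasDerivAt_right
          ((hιcont.mono hsub).intervalIntegrable) ?_ ((hιcont.continuousAt (hJopen.mem_nhds hs)))
        exact ⟨J, hJopen.mem_nhds hs, hιcont.aestronglyMeasurable hJopen.measurableSet⟩
      set N : ℝ → ℂ := fun s => Complex.exp (-(Complex.log (f c)) - ψ s) * f (γ s) with hN
      have hNderiv : ∀ s ∈ J, HasDerivAt N 0 s := by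
        intro s hs
        have hγs : γ s ∈ ball c ρ := hγmem s hs
        have hfd : DifferentiableAt ℂ f (γ s) :=
          hf.differentiableAt (isOpen_ball.mem_nhds hγs)
        have hγ' : HasDerivAt γ v s := by
          simpa [hγ] using ((hasDerivAt_id s).smul_const v).const_add c
        have hfγ : HasDerivAt (fun s => f (γ s)) (v • deriv f (γ s)) s :=
          HasDerivAt.scomp s hfd.hasDerivAt hγ'
        have hA : HasDerivAt (fun s => -(Complex.log (f c)) - ψ s) (-(ι s)) s :=
          (hψ s hs).const_sub _
        have hE : HasDerivAt (fun s => Complex.exp (-(Complex.log (f c)) - ψ s))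
            (Complex.exp (-(Complex.log (f c)) - ψ s) * (-(ι s))) s := hA.cexp
        have := hE.mul hfγ
        convert this using 1
        · rfl
        · rfl
        have hfγne : f (γ s) ≠ 0 := hnz _ hγs
        simp only [hι, hφ, smul_eq_mul]
        field_simp
        ring
      have hIccJ : Icc (0:ℝ) 1 ⊆ J := fun x hx =>
        ⟨by have := hx.1; linarith, lt_of_le_of_lt hx.2 hT1⟩
      have hNconst : N 1 = N 0 := by
        apply constant_of_has_deriv_right_zero
          (fun x hx => ((hNderiv x (hIccJ hx)).continuousAt).continuousWithinAt)
          (fun x hx => ((hNderiv x (hIccJ (Ico_subset_Icc_self hx))).hasDerivWithinAt))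
        exact right_mem_Icc.mpr zero_le_one
      have hγ0 : γ 0 = c := by simp [hγ]
      have hγ1 : γ 1 = z := by simp [hγ, hv]
      have hψ0 : ψ 0 = 0 := intervalIntegral.integral_same
      have hN0 : N 0 = 1 := by
        rw [hN]
        simp only [hψ0, hγ0, sub_zero, Complex.exp_neg, Complex.exp_log hfc]
        exact inv_mul_cancel₀ hfc
      have hN1 : Complex.exp (-(Complex.log (f c)) - ψ 1) * f z = 1 := by
        have h9 : N 1 = 1 := hNconst.trans hN0
        simp only [hN, hγ1] at h9
        exact h9
      have hLz : L z = Complex.log (f c) + ψ 1 := rfl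
      rw [hLz, Complex.exp_add]
      have hne : Complex.exp (-(Complex.log (f c)) - ψ 1) ≠ 0 := Complex.exp_ne_zero _
      have h2 : Complex.exp (-(Complex.log (f c)) - ψ 1)
          = (Complex.exp (Complex.log (f c)) * Complex.exp (ψ 1))⁻¹ := by
        rw [← Complex.exp_add, ← Complex.exp_neg]
        ring_nf
      rw [h2] at hN1
      exact (inv_mul_eq_one₀ (by rw [← Complex.exp_add]; exact Complex.exp_ne_zero _)).mp hN1
  -- Step 2 : continuity of L on the ball
  have hLcont : ∀ z1 ∈ ball c ρ, ContinuousAt L z1 := by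
    intro z1 hz1
    set ρ' : ℝ := (dist z1 c + ρ) / 2 with hρ'
    have hz1' : dist z1 c < ρ' := by
      have := mem_ball.mp hz1; rw [hρ']; linarith
    have hρ'ρ : ρ' < ρ := by
      have := mem_ball.mp hz1; rw [hρ']; linarith
    have hρ'pos : 0 < ρ' := lt_of_le_of_lt dist_nonneg hz1'
    set clamp : ℝ → ℝ := fun t => max 0 (min 1 t) with hclamp
    have hclampc : Continuous clamp := continuous_const.max (continuous_const.min continuous_id)
    have hclamp01 : ∀ t, 0 ≤ clamp t ∧ clamp t ≤ 1 := by
      intro t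
      constructor
      · exact le_max_left _ _
      · rw [hclamp]
        simp only [max_le_iff]
        exact ⟨zero_le_one, min_le_left _ _⟩
    set G : ↥(ball c ρ') → ℝ → ℂ :=
      fun zs t => ((zs:ℂ) - c) * φ (c + (clamp t : ℝ) • ((zs:ℂ) - c)) with hG
    have hmem' : ∀ (p : ↥(ball c ρ') × ℝ), c + (clamp p.2 : ℝ) • ((p.1:ℂ) - c) ∈ ball c ρ := by
      rintro ⟨zs, t⟩
      have h1 : ‖((zs:ℂ) - c)‖ < ρ' := by
        have := zs.2; rw [mem_ball, dist_eq_norm] at this; exact this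
      have h2 : dist (c + (clamp t : ℝ) • ((zs:ℂ) - c)) c = clamp t * ‖(zs:ℂ) - c‖ := by
        rw [dist_eq_norm, add_sub_cancel_left, norm_smul, Real.norm_eq_abs,
          _root_.abs_of_nonneg (hclamp01 t).1]
      rw [mem_ball, h2]
      calc clamp t * ‖(zs:ℂ) - c‖ ≤ 1 * ‖(zs:ℂ) - c‖ :=
            mul_le_mul_of_nonneg_right (hclamp01 t).2 (norm_nonneg _)
        _ = ‖(zs:ℂ) - c‖ := one_mul _
        _ < ρ := lt_trans h1 hρ'ρ
    have hGcont : Continuous (Function.uncurry G) := by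
      apply Continuous.mul
      · fun_prop
      · apply hφc.comp_continuous
        · fun_prop
        · exact hmem'
    have hcont' : Continuous (fun zs : ↥(ball c ρ') => ∫ t in (0:ℝ)..1, G zs t) :=
      continuous_parametric_intervalIntegral_of_continuous' hGcont 0 1
    have hLrestr : ContinuousOn L (ball c ρ') := by
      rw [continuousOn_iff_continuous_restrict]
      apply (continuous_const.add hcont').congr
      intro zs
      rw [restrict_apply, hL]
      show Complex.log (f c) + (∫ t in (0:ℝ)..1, G zs t) = _
      congr 1
      apply intervalIntegral.integral_congr
      intro t ht
      rw [uIcc_of_le zero_le_one] at ht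
      have hct : clamp t = t := by
        rw [hclamp]
        simp only [min_eq_right ht.2, max_eq_right ht.1]
      simp only [hG, hct]
    exact hLrestr.continuousAt (isOpen_ball.mem_nhds (mem_ball.mpr hz1'))
  -- Step 3 : the root
  have hm0 : (m:ℂ) ≠ 0 := Nat.cast_ne_zero.mpr (by omega)
  refine ⟨fun z => Complex.exp (L z / m), ?_, ?_⟩
  · intro z1 hz1
    have hfz1 : f z1 ≠ 0 := hnz z1 hz1
    have hfda : DifferentiableAt ℂ f z1 := hf.differentiableAt (isOpen_ball.mem_nhds hz1)
    set Λ : ℂ → ℂ := fun z => L z1 + Complex.log (f z / f z1) with hΛ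
    have hΛdiff : DifferentiableAt ℂ Λ z1 := by
      apply DifferentiableAt.const_add
      apply DifferentiableAt.clog (hfda.div_const _)
      rw [div_self hfz1]
      exact Complex.one_mem_slitPlane
    have hslit : ∀ᶠ z in nhds z1, f z / f z1 ∈ Complex.slitPlane := by
      have hcf : ContinuousAt (fun z => f z / f z1) z1 := (hfda.continuousAt).div_const _
      have h1 : f z1 / f z1 = 1 := div_self hfz1
      have := hcf.preimage_mem_nhds (Complex.isOpen_slitPlane.mem_nhds
        (by rw [h1]; exact Complex.one_mem_slitPlane))
      exact this
    have hball : ∀ᶠ z in nhds z1, z ∈ ball c ρ := isOpen_ball.eventually_mem hz1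
    have hEq : ∀ᶠ z in nhds z1, L z = Λ z := by
      have hΛcont : ContinuousAt Λ z1 := hΛdiff.continuousAt
      have hLc : ContinuousAt L z1 := hLcont z1 hz1
      have hEcont : ContinuousAt (fun z => L z - Λ z) z1 := hLc.sub hΛcont
      have hE0 : L z1 - Λ z1 = 0 := by
        rw [hΛ]
        simp only [div_self hfz1, Complex.log_one, add_zero, sub_self]
      have hsmall : ∀ᶠ z in nhds z1, ‖L z - Λ z‖ < 1 := by
        have := hEcont.eventually_mem (Metric.ball_mem_nhds (L z1 - Λ z1) one_pos)
        filter_upwards [this] with z hz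
        rw [hE0] at hz
        simpa [dist_eq_norm] using hz
      have hexpE : ∀ᶠ z in nhds z1, Complex.exp (L z - Λ z) = 1 := by
        filter_upwards [hball, hslit] with z hzb hzs
        have hfz : f z ≠ 0 := hnz z hzb
        have h1 : Complex.exp (Λ z) = f z := by
          rw [hΛ, Complex.exp_add, hexp z1 hz1, Complex.exp_log (div_ne_zero hfz hfz1)]
          field_simp
        rw [Complex.exp_sub, hexp z hzb, h1, div_self hfz]
      filter_upwards [hsmall, hexpE] with z h1 h2
      obtain ⟨n, hn⟩ := Complex.exp_eq_one_iff.mp h2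
      have hn0 : n = 0 := by
        by_contra hne
        have : (1:ℝ) ≤ |(n:ℝ)| := by
          rw [← Int.cast_abs]
          exact_mod_cast Int.one_le_abs (by exact_mod_cast hne)
        have hnorm : ‖(n : ℂ) * (2 * (Real.pi:ℂ) * Complex.I)‖ = |(n:ℝ)| * (2 * Real.pi) := by
          rw [norm_mul]
          congr 1
          · exact Complex.norm_intCast n
          · rw [norm_mul, norm_mul, Complex.norm_I, mul_one]
            simp [Complex.norm_real, Real.norm_eq_abs, _root_.abs_of_pos Real.pi_pos]
        rw [hn, hnorm] at h1
        nlinarith [Real.pi_gt_three]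
      rw [hn0] at hn
      simp only [Int.cast_zero, zero_mul] at hn
      exact sub_eq_zero.mp hn
    have hdiff2 : DifferentiableAt ℂ (fun z => Complex.exp (Λ z / m)) z1 :=
      (hΛdiff.div_const _).cexp
    have heps : (fun z => Complex.exp (L z / m)) =ᶠ[nhds z1]
        (fun z => Complex.exp (Λ z / m)) := by
      filter_upwards [hEq] with z hz
      rw [hz]
    exact ((heps.differentiableAt_iff).mpr hdiff2).differentiableWithinAt
  · intro z hz
    rw [← Complex.exp_nat_mul]
    rw [mul_div_cancel₀ _ hm0]
    exact hexp z hz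




lemma mono_bS {b S : ℝ} (hb : 0 ≤ b) (hbS : b ≤ S) {α1 β1 α2 β2 : ℕ}
    (hsum : α1 + β1 = α2 + β2) (hβ : β1 ≤ β2) : b ^ α1 * S ^ β1 ≤ b ^ α2 * S ^ β2 := by
  have hS0 : 0 ≤ S := le_trans hb hbS
  have hα : α2 ≤ α1 := by omega
  have h1 : b ^ α1 = b ^ α2 * b ^ (α1 - α2) := by rw [← pow_add]; congr 1; omega
  have h2 : β2 = (α1 - α2) + β1 := by omega
  have h3 : b ^ (α1 - α2) ≤ S ^ (α1 - α2) := pow_le_pow_left₀ hb hbS _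
  calc b ^ α1 * S ^ β1 = b ^ α2 * b ^ (α1 - α2) * S ^ β1 := by rw [← h1]
    _ ≤ b ^ α2 * S ^ (α1 - α2) * S ^ β1 := by
        apply mul_le_mul_of_nonneg_right
          (mul_le_mul_of_nonneg_left h3 (pow_nonneg hb _)) (pow_nonneg hS0 _)
    _ = b ^ α2 * S ^ β2 := by rw [h2, pow_add]; ring

lemma norm_iteratedDeriv_pow (M : ℕ) : ∀ k : ℕ, ∃ C : ℝ, 0 < C ∧
    ∀ (u : ℂ → ℂ) (w : ℂ) (d S b : ℝ), 0 < d →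
    DifferentiableOn ℂ u (ball w d) → (∀ z ∈ ball w d, ‖u z‖ ≤ S) →
    ‖u w‖ ≤ b → 0 ≤ b → b ≤ S →
    ‖iteratedDeriv k (fun z => u z ^ M) w‖ ≤
      C * (b ^ (M - min k M) * S ^ (min k M)) / d ^ k := by
  induction M with
  | zero =>
    intro k
    refine ⟨1, one_pos, fun u w d S b hd hu hS hb hb0 hbS => ?_⟩
    have he : (fun z : ℂ => u z ^ 0) = fun _ => (1:ℂ) := by funext z; rw [pow_zero]
    rw [he]
    rcases Nat.eq_zero_or_pos k with rfl | hk
    · simp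
    · have : iteratedDeriv k (fun _ : ℂ => (1:ℂ)) w = 0 := by
        rw [iteratedDeriv_eq_iteratedFDeriv, iteratedFDeriv_const_of_ne (by omega)]
        simp
      rw [this, norm_zero]
      have hS0 : 0 ≤ S := le_trans hb0 hbS
      apply div_nonneg _ (pow_nonneg hd.le _)
      exact mul_nonneg zero_le_one (mul_nonneg (pow_nonneg hb0 _) (pow_nonneg hS0 _))
  | succ M ih =>
    intro k
    choose CC hCC using ih
    choose AA hAA using crude_cauchy
    set C : ℝ := (∑ i ∈ Finset.range k, (k.choose i : ℝ) * CC i * AA (k - i)) + CC k with hC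
    have hCpos : 0 < C := by
      rw [hC]
      have h1 : 0 ≤ ∑ i ∈ Finset.range k, (k.choose i : ℝ) * CC i * AA (k - i) := by
        apply Finset.sum_nonneg
        intro i hi
        have := (hCC i).1
        have := (hAA (k - i)).1
        have : (0:ℝ) ≤ k.choose i := Nat.cast_nonneg _
        positivity
      linarith [(hCC k).1]
    refine ⟨C, hCpos, fun u w d S b hd hu hS hb hb0 hbS => ?_⟩
    have hS0 : 0 ≤ S := le_trans hb0 hbS
    have hwmem : w ∈ ball w d := mem_ball_self hd
    have hana : AnalyticOnNhd ℂ u (ball w d) := hu.analyticOnNhd isOpen_ball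
    have hcd : ContDiffOn ℂ ⊤ u (ball w d) := hana.contDiffOn isOpen_ball.uniqueDiffOn
    have hcdM : ContDiffOn ℂ ⊤ (fun z => u z ^ M) (ball w d) := hcd.pow M
    have he : (fun z : ℂ => u z ^ (M + 1)) = fun z => u z ^ M * u z := by
      funext z; rw [pow_succ]
    rw [he]
    -- Leibniz bound
    have hleib := norm_iteratedFDerivWithin_mul_le (𝕜 := ℂ) hcdM hcd
      isOpen_ball.uniqueDiffOn hwmem (n := k) le_top
    have hconv : ∀ (g : ℂ → ℂ) (n : ℕ),
        ‖iteratedFDerivWithin ℂ n g (ball w d) w‖ = ‖iteratedDeriv n g w‖ := by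
      intro g n
      rw [iteratedFDerivWithin_of_isOpen n isOpen_ball hwmem,
        norm_iteratedFDeriv_eq_norm_iteratedDeriv]
    rw [← norm_iteratedFDeriv_eq_norm_iteratedDeriv,
      ← iteratedFDerivWithin_of_isOpen k isOpen_ball hwmem]
    refine le_trans hleib ?_
    set T : ℝ := b ^ (M + 1 - min k (M+1)) * S ^ (min k (M+1)) with hT
    have hT0 : 0 ≤ T := by positivity
    rw [Finset.sum_range_succ]
    -- the i = k term
    have hterm_k : (k.choose k : ℝ) * ‖iteratedFDerivWithin ℂ k (fun z => u z ^ M) (ball w d) w‖ *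
        ‖iteratedFDerivWithin ℂ (k - k) u (ball w d) w‖ ≤ CC k * T / d ^ k := by
      rw [Nat.choose_self, Nat.cast_one, one_mul, Nat.sub_self, hconv, hconv]
      have h1 := (hCC k).2 u w d S b hd hu hS hb hb0 hbS
      have h2 : ‖iteratedDeriv 0 u w‖ ≤ b := by rw [iteratedDeriv_zero]; exact hb
      calc ‖iteratedDeriv k (fun z => u z ^ M) w‖ * ‖iteratedDeriv 0 u w‖
          ≤ (CC k * (b ^ (M - min k M) * S ^ (min k M)) / d ^ k) * b := by
            apply mul_le_mul h1 h2 (norm_nonneg _)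
            apply div_nonneg _ (pow_nonneg hd.le _)
            exact mul_nonneg (hCC k).1.le (mul_nonneg (pow_nonneg hb0 _) (pow_nonneg hS0 _))
        _ = CC k * (b ^ ((M - min k M) + 1) * S ^ (min k M)) / d ^ k := by
            rw [pow_succ]; ring
        _ ≤ CC k * T / d ^ k := by
            apply (div_le_div_iff_of_pos_right (pow_pos hd k)).mpr
            apply mul_le_mul_of_nonneg_left _ (hCC k).1.le
            exact mono_bS hb0 hbS (by omega) (by omega)
    -- the i < k terms
    have hterm : ∀ i ∈ Finset.range k,
        (k.choose i : ℝ) * ‖iteratedFDerivWithin ℂ i (fun z => u z ^ M) (ball w d) w‖ *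
        ‖iteratedFDerivWithin ℂ (k - i) u (ball w d) w‖ ≤
        (k.choose i : ℝ) * CC i * AA (k - i) * (T / d ^ k) := by
      intro i hi
      have hik : i < k := Finset.mem_range.mp hi
      rw [hconv, hconv]
      have h1 := (hCC i).2 u w d S b hd hu hS hb hb0 hbS
      have h2 := (hAA (k - i)).2 u w d S hd hu hS
      have hXT : b ^ (M - min i M) * S ^ (min i M) * S ≤ T := by
        rw [mul_assoc, ← pow_succ]
        exact mono_bS hb0 hbS (by omega) (by omega)
      have hnn1 : (0:ℝ) ≤ CC i * (b ^ (M - min i M) * S ^ (min i M)) / d ^ i :=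
        div_nonneg (mul_nonneg (hCC i).1.le
          (mul_nonneg (pow_nonneg hb0 _) (pow_nonneg hS0 _))) (pow_nonneg hd.le _)
      calc (k.choose i : ℝ) * ‖iteratedDeriv i (fun z => u z ^ M) w‖ *
          ‖iteratedDeriv (k - i) u w‖
          ≤ (k.choose i : ℝ) * (CC i * (b ^ (M - min i M) * S ^ (min i M)) / d ^ i) *
            (AA (k - i) * S / d ^ (k - i)) := by
            apply mul_le_mul (mul_le_mul_of_nonneg_left h1 (Nat.cast_nonneg _)) h2
              (norm_nonneg _) (mul_nonneg (Nat.cast_nonneg _) hnn1)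
        _ = (k.choose i : ℝ) * CC i * AA (k - i) *
            ((b ^ (M - min i M) * S ^ (min i M) * S) / d ^ k) := by
            rw [mul_assoc, div_mul_div_comm, ← pow_add, Nat.add_sub_cancel' hik.le]
            ring
        _ ≤ (k.choose i : ℝ) * CC i * AA (k - i) * (T / d ^ k) := by
            apply mul_le_mul_of_nonneg_left
            · exact (div_le_div_iff_of_pos_right (pow_pos hd k)).mpr hXT
            · exact mul_nonneg (mul_nonneg (Nat.cast_nonneg _) (hCC i).1.le) (hAA (k-i)).1.le
    refine le_trans (add_le_add (Finset.sum_le_sum hterm) hterm_k) ?_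
    have hsum : ∑ i ∈ Finset.range k, (k.choose i : ℝ) * CC i * AA (k - i) * (T / d ^ k) +
        CC k * T / d ^ k = C * T / d ^ k := by
      rw [← Finset.sum_mul, mul_div_assoc (CC k), ← add_mul, ← hC, ← mul_div_assoc]
    rw [hsum, hT]








lemma main_bound_hard {k m : ℕ} (hk : 1 ≤ k) (hkm : k < m) {r : ℝ} (hr : 0 < r) :
    ∃ C : ℝ, 0 < C ∧ ∀ (f : ℂ → ℂ) (z0 : ℂ) (η : ℝ), 0 < η → η ≤ 1 →
    DifferentiableOn ℂ f (ball z0 (16 * r)) →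
    (∀ a ∈ ball z0 (16 * r), f a = 0 → ∀ j < m, iteratedDeriv j f a = 0) →
    (∀ z ∈ ball z0 (16 * r), ‖f z‖ ≤ η ^ m) →
    ∀ w ∈ ball z0 r, ‖(iteratedDeriv k f w) ^ m / (f w) ^ ((m:ℤ) - (k:ℤ))‖ ≤ C * η ^ k := by
  obtain ⟨C4, hC4pos, hC4⟩ := norm_iteratedDeriv_pow m k
  refine ⟨C4 ^ m * (2 / r) ^ (k * m), by positivity, ?_⟩
  intro f z0 η hη hη1 hf hmult hsmall w hw
  have hm1 : 1 ≤ m := le_trans hk hkm.le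
  have hm0 : m ≠ 0 := by omega
  have hwD : w ∈ ball z0 (16 * r) :=
    mem_of_mem_of_subset hw (ball_subset_ball (by linarith))
  by_cases hfw : f w = 0
  · have h0 : iteratedDeriv k f w = 0 := hmult w hwD hfw k hkm
    rw [h0, zero_pow hm0, zero_div, norm_zero]
    positivity
  -- key computation given a zero-free ball of radius d around w and bound S1^m there
  have key : ∀ d S1 : ℝ, 0 < d → d ≤ r → 0 ≤ S1 →
      (∀ z ∈ ball w d, f z ≠ 0) → (∀ z ∈ ball w d, ‖f z‖ ≤ S1 ^ m) →
      ‖(iteratedDeriv k f w) ^ m / (f w) ^ ((m:ℤ) - (k:ℤ))‖ ≤ C4 ^ m * (S1 / d) ^ (k * m) := by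
    intro d S1 hd hdr hS10 hnz hfS
    have hsub : ball w d ⊆ ball z0 (16 * r) := by
      intro z hz
      rw [mem_ball] at *
      calc dist z z0 ≤ dist z w + dist w z0 := dist_triangle _ _ _
        _ < d + r := add_lt_add hz hw
        _ ≤ 16 * r := by linarith
    obtain ⟨u, hu, hum⟩ := exists_pow_root hd (hf.mono hsub) hnz m hm1
    have hub : ∀ z ∈ ball w d, ‖u z‖ ≤ S1 := by
      intro z hz
      have h1 : ‖u z‖ ^ m = ‖f z‖ := by rw [← hum z hz, norm_pow]
      have h2 : ‖u z‖ ^ m ≤ S1 ^ m := by rw [h1]; exact hfS z hz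
      exact le_of_pow_le_pow_left₀ hm0 hS10 h2
    have hwmem : w ∈ ball w d := mem_ball_self hd
    set b : ℝ := ‖u w‖ with hb
    have hb0 : 0 ≤ b := norm_nonneg _
    have hbS : b ≤ S1 := hub w hwmem
    have hbpos : 0 < b := by
      rw [hb, norm_pos_iff]
      intro h0
      apply hfw
      rw [← hum w hwmem, h0, zero_pow hm0]
    have hDk : iteratedDeriv k f w = iteratedDeriv k (fun z => u z ^ m) w := by
      apply Filter.EventuallyEq.iteratedDeriv_eq
      filter_upwards [isOpen_ball.mem_nhds hwmem] with z hz
      exact (hum z hz).symm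
    have happ := hC4 u w d S1 b hd hu hub le_rfl hb0 hbS
    rw [min_eq_left hkm.le] at happ
    have hfwnorm : ‖f w‖ = b ^ m := by rw [← hum w hwmem, norm_pow]
    have hcast : (m:ℤ) - (k:ℤ) = ((m - k : ℕ) : ℤ) := by omega
    rw [hcast, zpow_natCast, norm_div, norm_pow, norm_pow, hfwnorm, hDk]
    have hnum : ‖iteratedDeriv k (fun z => u z ^ m) w‖ ^ m ≤
        (C4 * (b ^ (m - k) * S1 ^ k) / d ^ k) ^ m :=
      pow_le_pow_left₀ (norm_nonneg _) happ m
    have hden : (0:ℝ) < (b ^ m) ^ (m - k) := by positivity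
    calc ‖iteratedDeriv k (fun z => u z ^ m) w‖ ^ m / (b ^ m) ^ (m - k)
        ≤ (C4 * (b ^ (m - k) * S1 ^ k) / d ^ k) ^ m / (b ^ m) ^ (m - k) :=
          div_le_div_of_nonneg_right hnum hden.le
      _ = C4 ^ m * (S1 / d) ^ (k * m) := by
          rw [div_pow, mul_pow, mul_pow, div_pow, ← pow_mul, ← pow_mul, ← pow_mul,
            ← pow_mul]
          rw [Nat.mul_comm (m - k) m]
          field_simp
  have hkkm : k ≤ k * m := by
    calc k = k * 1 := (mul_one k).symm
      _ ≤ k * m := Nat.mul_le_mul_left k hm1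
  have tail : ∀ x : ℝ, 0 ≤ x → x ≤ (2/r)*η →
      C4^m * x^(k*m) ≤ C4 ^ m * (2 / r) ^ (k * m) * η ^ k := by
    intro x hx0 hx
    calc C4^m * x^(k*m) ≤ C4^m * ((2/r)*η)^(k*m) := by
          apply mul_le_mul_of_nonneg_left (pow_le_pow_left₀ hx0 hx _) (by positivity)
      _ = C4^m * (2/r)^(k*m) * η^(k*m) := by rw [mul_pow]; ring
      _ ≤ C4^m * (2/r)^(k*m) * η^k := by
          apply mul_le_mul_of_nonneg_left
            (pow_le_pow_of_le_one hη.le hη1 hkkm) (by positivity)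
  by_cases hzero : ∃ a ∈ closedBall w r, f a = 0
  · -- Case A : there is a zero nearby
    obtain ⟨a0, ha0, ha0z⟩ := hzero
    set Z : Set ℂ := closedBall w r ∩ f ⁻¹' {0} with hZ
    have hcbsub : closedBall w r ⊆ ball z0 (16 * r) := by
      intro z hz
      rw [mem_closedBall] at hz
      rw [mem_ball] at *
      calc dist z z0 ≤ dist z w + dist w z0 := dist_triangle _ _ _
        _ < r + r := add_lt_add_of_le_of_lt hz hw
        _ ≤ 16 * r := by linarith
    have hZclosed : IsClosed Z :=
      ContinuousOn.preimage_isClosed_of_isClosed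
        ((hf.continuousOn).mono hcbsub) Metric.isClosed_closedBall isClosed_singleton
    have hZcomp : IsCompact Z :=
      Metric.isCompact_of_isClosed_isBounded hZclosed
        (Metric.isBounded_closedBall.subset inter_subset_left)
    have hZne : Z.Nonempty := ⟨a0, ha0, ha0z⟩
    obtain ⟨a, haZ, hamin⟩ := hZcomp.exists_isMinOn hZne
      ((continuous_const.dist continuous_id).continuousOn (f := fun z => dist w z))
    set d : ℝ := dist w a with hd
    have hfa : f a = 0 := by simpa using haZ.2
    have hdr : d ≤ r := by
      have h1 := haZ.1
      rw [mem_closedBall] at h1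
      rw [hd, dist_comm]; exact h1
    have hdpos : 0 < d := by
      rcases lt_or_eq_of_le (dist_nonneg : 0 ≤ d) with h | h
      · exact h
      · exfalso
        apply hfw
        have hwa : w = a := dist_eq_zero.mp h.symm
        rw [hwa]; exact hfa
    have hnz : ∀ z ∈ ball w d, f z ≠ 0 := by
      intro z hz h0
      have hzr : z ∈ closedBall w r :=
        mem_closedBall.mpr (le_trans (mem_ball.mp hz).le hdr)
      have hzZ : z ∈ Z := ⟨hzr, by simp [h0]⟩
      have h2 : d ≤ dist w z := hamin hzZ
      rw [dist_comm] at h2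
      exact absurd (mem_ball.mp hz) (not_lt.mpr h2)
    have haD : a ∈ ball z0 (16*r) := hcbsub haZ.1
    have haz0 : dist a z0 < 2*r := by
      have h1 : dist a w ≤ r := by rw [dist_comm, ← hd]; exact hdr
      calc dist a z0 ≤ dist a w + dist w z0 := dist_triangle _ _ _
        _ < r + r := add_lt_add_of_le_of_lt h1 (mem_ball.mp hw)
        _ = 2*r := by ring
    have hsub13 : ball a (13*r) ⊆ ball z0 (16*r) := by
      intro x hx
      rw [mem_ball] at *
      calc dist x z0 ≤ dist x a + dist a z0 := dist_triangle _ _ _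
        _ < 13*r + 2*r := add_lt_add hx haz0
        _ ≤ 16*r := by linarith
    have hva : ∀ j < m, iteratedDeriv j f a = 0 := hmult a haD hfa
    obtain ⟨q, hq, hfq⟩ := exists_factor_pow (by positivity : (0:ℝ) < 13*r)
      (hf.mono hsub13) m hva
    have h7 : (7:ℝ)*r ≠ 0 := by positivity
    have hcl : closure (ball a (7*r)) = closedBall a (7*r) := closure_ball a h7
    have hqb : ∀ x ∈ closedBall a (7*r), ‖q x‖ ≤ η ^ m / (7*r) ^ m := by
      intro x hx
      apply Complex.norm_le_of_forall_mem_frontier_norm_le Metric.isBounded_ball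
      · apply DifferentiableOn.diffContOnCl
        rw [hcl]
        apply hq.mono
        intro y hy
        rw [mem_closedBall] at hy
        rw [mem_ball]
        linarith
      · intro y hy
        rw [frontier_ball a h7] at hy
        have hy7 : dist y a = 7*r := mem_sphere.mp hy
        have hy13 : y ∈ ball a (13*r) := by rw [mem_ball, hy7]; linarith
        have hyD : y ∈ ball z0 (16*r) := hsub13 hy13
        have hya : ‖y - a‖ = 7*r := by rw [← dist_eq_norm]; exact hy7
        have hnorm : ‖f y‖ = (7*r)^m * ‖q y‖ := by
          rw [hfq y hy13, norm_mul, norm_pow, hya]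
        have hsm := hsmall y hyD
        rw [hnorm] at hsm
        rw [div_eq_inv_mul, ← inv_pow]
        calc ‖q y‖ = ((7*r)⁻¹)^m * ((7*r)^m * ‖q y‖) := by
              rw [← mul_assoc, ← mul_pow, inv_mul_cancel₀ h7, one_pow, one_mul]
          _ ≤ ((7*r)⁻¹)^m * η^m := by
              apply mul_le_mul_of_nonneg_left hsm (by positivity)
          _ = (7*r)⁻¹ ^ m * η ^ m := rfl
      · rw [hcl]; exact hx
    set S1 : ℝ := 2*d*η/(7*r) with hS1
    have hfS : ∀ z ∈ ball w d, ‖f z‖ ≤ S1 ^ m := by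
      intro z hz
      have hza : dist z a < 2*d := by
        calc dist z a ≤ dist z w + dist w a := dist_triangle _ _ _
          _ < d + d := by
              have := mem_ball.mp hz
              rw [← hd]
              exact add_lt_add_of_lt_of_le this le_rfl
          _ = 2*d := by ring
      have hz7 : z ∈ closedBall a (7*r) := by
        rw [mem_closedBall]
        linarith
      have hz13 : z ∈ ball a (13*r) := by
        rw [mem_ball]
        linarith
      have heq : ‖f z‖ = ‖z - a‖^m * ‖q z‖ := by rw [hfq z hz13, norm_mul, norm_pow]
      have hzaa : ‖z - a‖ ≤ 2*d := by rw [← dist_eq_norm]; exact hza.le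
      calc ‖f z‖ = ‖z-a‖^m * ‖q z‖ := heq
        _ ≤ (2*d)^m * (η^m/(7*r)^m) :=
            mul_le_mul (pow_le_pow_left₀ (norm_nonneg _) hzaa m) (hqb z hz7)
              (norm_nonneg _) (by positivity)
        _ = S1 ^ m := by
            rw [hS1, div_pow, mul_pow, mul_pow]
            field_simp
            ring
    have hkey := key d S1 hdpos hdr (by positivity) hnz hfS
    refine le_trans hkey ?_
    have hS1d : S1 / d = 2*η/(7*r) := by
      rw [hS1]
      field_simp
    rw [hS1d]
    apply tail
    · positivity
    · rw [div_mul_eq_mul_div]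
      apply div_le_div_of_nonneg_left (by positivity) hr
      linarith
  · -- Case B : no zeros within distance r
    push_neg at hzero
    have hnz : ∀ z ∈ ball w r, f z ≠ 0 := fun z hz =>
      hzero z (ball_subset_closedBall hz)
    have hfS : ∀ z ∈ ball w r, ‖f z‖ ≤ η ^ m := fun z hz =>
      hsmall z (mem_of_mem_of_subset hz (by
        intro y hy
        rw [mem_ball] at *
        calc dist y z0 ≤ dist y w + dist w z0 := dist_triangle _ _ _
          _ < r + r := add_lt_add hy hw
          _ ≤ 16 * r := by linarith))
    have hkey := key r η hr le_rfl hη.le hnz hfS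
    refine le_trans hkey ?_
    apply tail
    · positivity
    · rw [div_mul_eq_mul_div]
      exact (div_le_div_iff_of_pos_right hr).mpr (by linarith)






lemma main_bound_easy {k m : ℕ} (hm : 1 ≤ m) (hmk : m ≤ k) {r : ℝ} (hr : 0 < r) :
    ∃ C : ℝ, 0 < C ∧ ∀ (f : ℂ → ℂ) (z0 : ℂ) (ε : ℝ), 0 < ε → ε ≤ 1 →
    DifferentiableOn ℂ f (ball z0 (16 * r)) →
    (∀ z ∈ ball z0 (16 * r), ‖f z‖ ≤ ε) →
    ∀ w ∈ ball z0 r, ‖(iteratedDeriv k f w) ^ m / (f w) ^ ((m:ℤ) - (k:ℤ))‖ ≤ C * ε ^ m := by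
  obtain ⟨A, hA, hAle⟩ := crude_cauchy k
  refine ⟨(A / r ^ k) ^ m, by positivity, ?_⟩
  intro f z0 ε hε hε1 hf hsmall w hw
  have hsubw : ball w r ⊆ ball z0 (16*r) := by
    intro z hz
    rw [mem_ball] at *
    calc dist z z0 ≤ dist z w + dist w z0 := dist_triangle _ _ _
      _ < r + r := add_lt_add hz hw
      _ ≤ 16*r := by linarith
  have hD : ‖iteratedDeriv k f w‖ ≤ A * ε / r ^ k :=
    hAle f w r ε hr (hf.mono hsubw) (fun z hz => hsmall z (hsubw hz))
  have hcast : (m:ℤ) - (k:ℤ) = -((k - m : ℕ) : ℤ) := by omega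
  rw [hcast, zpow_neg, zpow_natCast, div_eq_mul_inv, inv_inv, norm_mul, norm_pow, norm_pow]
  have hfw1 : ‖f w‖ ≤ 1 := le_trans (hsmall w (hsubw (mem_ball_self hr))) hε1
  have h1 : ‖f w‖ ^ (k - m) ≤ 1 := pow_le_one₀ (norm_nonneg _) hfw1
  have hDnn : (0:ℝ) ≤ A * ε / r ^ k := by positivity
  calc ‖iteratedDeriv k f w‖ ^ m * ‖f w‖ ^ (k-m)
      ≤ (A * ε / r ^ k) ^ m * 1 :=
        mul_le_mul (pow_le_pow_left₀ (norm_nonneg _) hD m) h1 (by positivity) (by positivity)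
    _ = (A / r^k)^m * ε^m := by
        rw [mul_one, div_pow, div_pow, mul_pow]
        ring

lemma main_bound {k m : ℕ} (hk : 1 ≤ k) (hm : 1 ≤ m) {r : ℝ} (hr : 0 < r) :
    ∃ C : ℝ, 0 < C ∧ ∀ (f : ℂ → ℂ) (z0 : ℂ) (η : ℝ), 0 < η → η ≤ 1 →
    DifferentiableOn ℂ f (ball z0 (16 * r)) →
    (∀ a ∈ ball z0 (16 * r), f a = 0 → ∀ j < m, iteratedDeriv j f a = 0) →
    (∀ z ∈ ball z0 (16 * r), ‖f z‖ ≤ η ^ m) →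
    ∀ w ∈ ball z0 r, ‖(iteratedDeriv k f w) ^ m / (f w) ^ ((m:ℤ) - (k:ℤ))‖ ≤ C * η := by
  rcases lt_or_ge k m with hkm | hmk
  · obtain ⟨C, hC, hle⟩ := main_bound_hard hk hkm hr
    refine ⟨C, hC, fun f z0 η hη hη1 hf hmult hsmall w hw => ?_⟩
    calc _ ≤ C * η ^ k := hle f z0 η hη hη1 hf hmult hsmall w hw
      _ ≤ C * η := mul_le_mul_of_nonneg_left
          (pow_le_of_le_one hη.le hη1 (by omega)) hC.le
  · obtain ⟨C, hC, hle⟩ := main_bound_easy hm hmk hr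
    refine ⟨C, hC, fun f z0 η hη hη1 hf hmult hsmall w hw => ?_⟩
    have hηm1 : η ^ m ≤ 1 := pow_le_one₀ hη.le hη1
    calc _ ≤ C * (η^m) ^ m := hle f z0 (η^m) (by positivity) hηm1 hf hsmall w hw
      _ ≤ C * η := by
          apply mul_le_mul_of_nonneg_left _ hC.le
          rw [← pow_mul]
          exact pow_le_of_le_one hη.le hη1 (by positivity)

/-- Theorem 2(a): if the holomorphic functions `g_n` (none identically
zero, all zeros of multiplicity at least `m`) converge to `0` locally uniformly on the
domain `D`, then `(g_n^(k))^m / g_n^(m-k) → 0` locally uniformly on `D`. -/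
theorem stmt_12 (D : Set ℂ) (hD : IsOpen D) (hDc : IsPreconnected D)
    (k m : ℕ) (hk : 1 ≤ k) (hm : 1 ≤ m)
    (g : ℕ → ℂ → ℂ) (hg : ∀ n, DifferentiableOn ℂ (g n) D)
    (hne : ∀ n, ∃ z ∈ D, g n z ≠ 0)
    (hmult : ∀ n, ∀ z ∈ D, g n z = 0 → ∀ j < m, iteratedDeriv j (g n) z = 0)
    (hconv : TendstoLocallyUniformlyOn g 0 atTop D) :
    TendstoLocallyUniformlyOn
      (fun n z => (iteratedDeriv k (g n) z) ^ m / (g n z) ^ ((m : ℤ) - (k : ℤ)))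
      0 atTop D := by
  rw [Metric.tendstoLocallyUniformlyOn_iff]
  intro ε hε x hx
  obtain ⟨R, hR0, hRD⟩ := Metric.isOpen_iff.mp hD x hx
  set r : ℝ := R / 17 with hr
  have hrpos : 0 < r := by positivity
  have hsub : closedBall x (16*r) ⊆ D := by
    intro z hz
    apply hRD
    rw [mem_closedBall] at hz
    rw [mem_ball]
    calc dist z x ≤ 16*r := hz
      _ < R := by rw [hr]; linarith
  have hsubo : ball x (16*r) ⊆ D := ball_subset_closedBall.trans hsub
  obtain ⟨C, hC, hCle⟩ := main_bound (k := k) (m := m) hk hm hrpos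
  set η : ℝ := min 1 (ε / (2 * C)) with hη
  have hηpos : 0 < η := lt_min one_pos (by positivity)
  have hη1 : η ≤ 1 := min_le_left _ _
  have hCη : C * η < ε := by
    calc C * η ≤ C * (ε / (2*C)) := mul_le_mul_of_nonneg_left (min_le_right _ _) hC.le
      _ = ε/2 := by field_simp [hC.ne']
      _ < ε := by linarith
  have hunif : TendstoUniformlyOn g 0 atTop (closedBall x (16*r)) :=
    (tendstoLocallyUniformlyOn_iff_forall_isCompact hD).mp hconv _ hsub (isCompact_closedBall x (16*r))
  have hev : ∀ᶠ n in atTop, ∀ z ∈ closedBall x (16*r), ‖g n z‖ ≤ η ^ m := by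
    have h2 := (Metric.tendstoUniformlyOn_iff.mp hunif) (η^m) (by positivity)
    filter_upwards [h2] with n hn z hz
    have h3 := hn z hz
    simp only [Pi.zero_apply, dist_zero_left] at h3
    exact h3.le
  refine ⟨ball x r, mem_nhdsWithin_of_mem_nhds (ball_mem_nhds x hrpos), ?_⟩
  filter_upwards [hev] with n hn y hy
  have hb := hCle (g n) x η hηpos hη1 ((hg n).mono hsubo)
    (fun a ha h0 j hj => hmult n a (hsubo ha) h0 j hj)
    (fun z hz => hn z (ball_subset_closedBall hz)) y hy
  simp only [Pi.zero_apply, dist_zero_left]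
  exact lt_of_le_of_lt hb hCη
end

section
/- Let f be meromorphic on Δ(0, R₀), α ∈ Δ(0, R₀), and |α| < r < R < R₀. Then n(r,f) · (R-r)(R-|α|)/(R² + r|α|) ≤ N_α(R, f) - N_α(r, f), where n(r,f) counts the poles of f in the closed disk of radius r with multiplicity. -/
open Complex

/-- The modified counting function `N_α(r, ·)` associated with a multiset `b` of poles
(counted with multiplicity). -/
noncomputable def modCounting (b : Multiset ℂ) (a : ℂ) (r : ℝ) : ℝ :=
  ((b.filter fun x => ‖x‖ < r).map fun x =>
    Real.log ‖((r : ℂ) ^ 2 - (starRingEnd ℂ) x * a) / ((r : ℂ) * (a - x))‖).sum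

lemma normSq_norm (z : ℂ) : ‖z‖^2 = Complex.normSq z := by
  rw [Complex.sq_norm]

lemma real_cross {r R s p N D : ℝ} (hr0 : 0 < r) (hrR : r < R) (hs0 : 0 ≤ s)
    (hsr2 : s < r^2) (hN0 : 0 < N) (hD0 : 0 < D) (habs : |p| ≤ s)
    (eN : N^2 = R^4 + s^2 - 2*R^2*p) (eD : D^2 = r^4 + s^2 - 2*r^2*p) :
    D * (R^2 + s) ≤ N * (r^2 + s) := by
  have h1 : 0 ≤ p + s := by cases abs_le.1 habs with | intro h _ => linarith
  have h2 : 0 ≤ R^2 - r^2 := by nlinarith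
  have h3 : 0 ≤ R^2*r^2 - s^2 := by nlinarith
  have expand : (N * (r^2+s))^2 - (D * (R^2+s))^2
      = 2*(p+s)*((R^2-r^2)*(R^2*r^2-s^2)) := by
    rw [mul_pow, mul_pow, eN, eD]; ring
  nlinarith [mul_nonneg (mul_nonneg h1 h2) h3, expand,
    mul_pos hD0 (by nlinarith : (0:ℝ) < R^2+s), mul_pos hN0 (by nlinarith : (0:ℝ) < r^2+s)]

lemma real_B {r R s N D : ℝ} (hr0 : 0 < r) (hrR : r < R) (hs0 : 0 ≤ s)
    (hN0 : 0 < N) (hD0 : 0 < D) (hcross : D * (R^2 + s) ≤ N * (r^2 + s)) :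
    (R * D) / (r * N) ≤ R * (r^2 + s) / (r * (R^2 + s)) := by
  have hR0 : 0 < R := hr0.trans hrR
  rw [div_le_div_iff₀ (mul_pos hr0 hN0) (mul_pos hr0 (by nlinarith : (0:ℝ) < R^2+s))]
  nlinarith [mul_le_mul_of_nonneg_left hcross (le_of_lt (mul_pos hR0 hr0))]

lemma real_final {r R t s : ℝ} (ht0 : 0 ≤ t) (ha : t < r) (hrR : r < R)
    (hs0 : 0 ≤ s) (hsrt : s ≤ r*t) :
    (R - r) * (R - t) / (R^2 + r*t) ≤ 1 - R * (r^2 + s) / (r * (R^2 + s)) := by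
  have hr0 : 0 < r := lt_of_le_of_lt ht0 ha
  have hR0 : 0 < R := hr0.trans hrR
  have hd1 : (0:ℝ) < R^2 + r*t := by nlinarith
  have hd2 : (0:ℝ) < r * (R^2 + s) := mul_pos hr0 (by nlinarith)
  have e : 1 - R * (r^2 + s) / (r * (R^2 + s))
      = (r * (R^2+s) - R * (r^2+s)) / (r * (R^2+s)) := by
    field_simp
  rw [e, div_le_div_iff₀ hd1 hd2]
  nlinarith [mul_nonneg (mul_nonneg (by linarith : (0:ℝ) ≤ R - r)
    (by linarith : (0:ℝ) ≤ r*t - s)) (by nlinarith : (0:ℝ) ≤ R*(R+r))]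

lemma key_ineq {a x : ℂ} {r R : ℝ} (ha : ‖a‖ < r) (hrR : r < R)
    (hx : ‖x‖ ≤ r) (hxa : x ≠ a) :
    (R - r) * (R - ‖a‖) / (R^2 + r*‖a‖) ≤
      Real.log ‖((R:ℂ)^2 - (starRingEnd ℂ) x * a)/((R:ℂ)*(a-x))‖ -
      Real.log ‖((r:ℂ)^2 - (starRingEnd ℂ) x * a)/((r:ℂ)*(a-x))‖ := by
  have ht0 : 0 ≤ ‖a‖ := norm_nonneg a
  have hr0 : 0 < r := lt_of_le_of_lt ht0 ha
  have hR0 : 0 < R := hr0.trans hrR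
  set t := ‖a‖ with ht
  set c := (starRingEnd ℂ) x * a with hc
  set s := ‖c‖ with hs
  set N := ‖((R:ℂ)^2 - c)‖ with hN
  set D := ‖((r:ℂ)^2 - c)‖ with hD
  set m := ‖a - x‖ with hm
  set p := c.re with hp
  have hs0 : 0 ≤ s := norm_nonneg c
  have hseq : s = ‖x‖ * t := by rw [hs, hc, norm_mul, RCLike.norm_conj]
  have hsrt : s ≤ r * t := by
    rw [hseq]; exact mul_le_mul_of_nonneg_right hx ht0
  have hsr2 : s < r^2 := lt_of_le_of_lt hsrt (by nlinarith)
  have hm0 : 0 < m := by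
    rw [hm]; exact norm_pos_iff.2 (sub_ne_zero.2 (Ne.symm hxa))
  have hRnorm : ‖((R:ℂ)^2)‖ = R^2 := by
    rw [norm_pow, Complex.norm_real, Real.norm_eq_abs, abs_of_pos hR0]
  have hrnorm : ‖((r:ℂ)^2)‖ = r^2 := by
    rw [norm_pow, Complex.norm_real, Real.norm_eq_abs, abs_of_pos hr0]
  have hNlb : R^2 - s ≤ N := by
    have := norm_sub_norm_le ((R:ℂ)^2) c; rw [hRnorm] at this; exact this
  have hDlb : r^2 - s ≤ D := by
    have := norm_sub_norm_le ((r:ℂ)^2) c; rw [hrnorm] at this; exact this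
  have hN0 : 0 < N := by nlinarith
  have hD0 : 0 < D := by nlinarith
  have habs_p : |p| ≤ s := Complex.abs_re_le_norm c
  have hs2 : s^2 = Complex.normSq c := normSq_norm c
  have eN : N^2 = R^4 + s^2 - 2*R^2*p := by
    rw [hN, normSq_norm, show ((R:ℂ))^2 = ((R^2:ℝ):ℂ) by push_cast; ring,
      Complex.normSq_sub, Complex.normSq_ofReal, hs2, Complex.mul_re]
    simp only [Complex.ofReal_re, Complex.ofReal_im, Complex.conj_re, Complex.conj_im, ← hp]
    ring
  have eD : D^2 = r^4 + s^2 - 2*r^2*p := by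
    rw [hD, normSq_norm, show ((r:ℂ))^2 = ((r^2:ℝ):ℂ) by push_cast; ring,
      Complex.normSq_sub, Complex.normSq_ofReal, hs2, Complex.mul_re]
    simp only [Complex.ofReal_re, Complex.ofReal_im, Complex.conj_re, Complex.conj_im, ← hp]
    ring
  have hnormR : ‖(R:ℂ)*(a-x)‖ = R * m := by
    rw [norm_mul, Complex.norm_real, Real.norm_eq_abs, abs_of_pos hR0, hm]
  have hnormr : ‖(r:ℂ)*(a-x)‖ = r * m := by
    rw [norm_mul, Complex.norm_real, Real.norm_eq_abs, abs_of_pos hr0, hm]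
  have hdiff : Real.log ‖((R:ℂ)^2 - c)/((R:ℂ)*(a-x))‖ -
      Real.log ‖((r:ℂ)^2 - c)/((r:ℂ)*(a-x))‖ = Real.log (r * N / (R * D)) := by
    rw [norm_div, norm_div, hnormR, hnormr, ← hN, ← hD]
    rw [Real.log_div hN0.ne' (by positivity : (R*m) ≠ 0),
      Real.log_div hD0.ne' (by positivity : (r*m) ≠ 0),
      Real.log_div (by positivity : (r*N) ≠ 0) (by positivity : (R*D) ≠ 0),
      Real.log_mul hR0.ne' hm0.ne', Real.log_mul hr0.ne' hm0.ne',
      Real.log_mul hr0.ne' hN0.ne', Real.log_mul hR0.ne' hD0.ne']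
    ring
  rw [hdiff]
  have hXpos : 0 < r * N / (R * D) := div_pos (mul_pos hr0 hN0) (mul_pos hR0 hD0)
  have hlog : 1 - (R * D) / (r * N) ≤ Real.log (r * N / (R * D)) := by
    have h := Real.log_le_sub_one_of_pos (inv_pos.2 hXpos)
    rw [Real.log_inv, inv_div] at h
    linarith
  have hcross := real_cross hr0 hrR hs0 hsr2 hN0 hD0 habs_p eN eD
  have hB := real_B hr0 hrR hs0 hN0 hD0 hcross
  have hfinal := real_final ht0 ha hrR hs0 hsrt
  linarith

lemma blaschke {a x : ℂ} {R : ℝ} (ha : ‖a‖ < R) (hx : ‖x‖ < R) :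
    ‖(R:ℂ) * (a - x)‖ ≤ ‖(R:ℂ)^2 - (starRingEnd ℂ) x * a‖ := by
  have hR : 0 < R := lt_of_le_of_lt (norm_nonneg a) ha
  have ha2 : Complex.normSq a < R^2 := by
    rw [← normSq_norm]; nlinarith [norm_nonneg a]
  have hx2 : Complex.normSq x < R^2 := by
    rw [← normSq_norm]; nlinarith [norm_nonneg x]
  have e1 : ‖(R:ℂ) * (a - x)‖^2
      = R^2 * (Complex.normSq a + Complex.normSq x - 2 * (a * (starRingEnd ℂ) x).re) := by
    rw [normSq_norm, Complex.normSq_mul, Complex.normSq_sub]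
    simp [Complex.normSq_apply, Complex.mul_re, Complex.mul_im]
    exact Or.inl (by ring)
  have e2 : ‖(R:ℂ)^2 - (starRingEnd ℂ) x * a‖^2
      = R^4 + Complex.normSq x * Complex.normSq a
        - 2 * R^2 * (a * (starRingEnd ℂ) x).re := by
    rw [normSq_norm, Complex.normSq_sub, Complex.normSq_mul]
    simp [Complex.normSq_apply, Complex.mul_re, Complex.mul_im, ← Complex.ofReal_pow]
    ring
  have h1 : ‖(R:ℂ) * (a - x)‖^2 ≤ ‖(R:ℂ)^2 - (starRingEnd ℂ) x * a‖^2 := by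
    rw [e1, e2]; nlinarith
  nlinarith [norm_nonneg ((R:ℂ) * (a - x)), norm_nonneg ((R:ℂ)^2 - (starRingEnd ℂ) x * a)]

lemma g_nonneg {a x : ℂ} {R : ℝ} (ha : ‖a‖ < R) (hx : ‖x‖ < R) (hxa : x ≠ a) :
    0 ≤ Real.log ‖((R:ℂ)^2 - (starRingEnd ℂ) x * a)/((R:ℂ)*(a-x))‖ := by
  have hR : 0 < R := lt_of_le_of_lt (norm_nonneg a) ha
  have hden : 0 < ‖(R:ℂ)*(a-x)‖ := by
    rw [norm_mul, Complex.norm_real, Real.norm_eq_abs, abs_of_pos hR]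
    exact mul_pos hR (norm_pos_iff.2 (sub_ne_zero.2 (Ne.symm hxa)))
  apply Real.log_nonneg
  rw [norm_div]
  rw [le_div_iff₀ hden, one_mul]
  exact blaschke ha hx

lemma g_boundary {a x : ℂ} {r : ℝ} (hr : 0 < r) (hx : ‖x‖ = r) (hxa : x ≠ a) :
    Real.log ‖((r:ℂ)^2 - (starRingEnd ℂ) x * a)/((r:ℂ)*(a-x))‖ = 0 := by
  have hnum : (r:ℂ)^2 - (starRingEnd ℂ) x * a = (starRingEnd ℂ) x * (x - a) := by
    have h1 : ((r:ℂ))^2 = ((Complex.normSq x : ℝ) : ℂ) := by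
      rw [← normSq_norm, hx]; push_cast; ring
    rw [h1, show ((Complex.normSq x : ℝ):ℂ) = (starRingEnd ℂ) x * x from by
      rw [mul_comm, Complex.mul_conj], ← mul_sub]
  rw [hnum, norm_div, norm_mul, norm_mul, RCLike.norm_conj, hx,
    Complex.norm_real, Real.norm_eq_abs, abs_of_pos hr, norm_sub_rev x a, div_self, Real.log_one]
  exact ne_of_gt (mul_pos hr (norm_pos_iff.2 (sub_ne_zero.2 (Ne.symm hxa))))

/-- For `|α| < r < R < R₀` and `f` meromorphic on `Δ(0, R₀)` with pole multiset `P`,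
`n(r,f)·(R-r)(R-|α|)/(R² + r|α|) ≤ N_α(R, f) - N_α(r, f)`, where `n(r,f)` counts the poles
of `f` in the closed disk of radius `r` with multiplicity. -/
theorem stmt_18 (R₀ : ℝ) (hR₀ : 0 < R₀) (f : ℂ → ℂ)
    (hf : MeromorphicOn f (Metric.ball 0 R₀))
    (P : Multiset ℂ)
    (hPmem : ∀ x ∈ P, x ∈ Metric.ball (0 : ℂ) R₀)
    (hP : ∀ z ∈ Metric.ball (0 : ℂ) R₀, ∀ h : MeromorphicAt f z, ∀ q : ℤ,
      meromorphicOrderAt f z = (q : WithTop ℤ) → P.count z = if q < 0 then (-q).toNat else 0)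
    (a : ℂ) (ha : a ∈ Metric.ball (0 : ℂ) R₀) (haP : a ∉ P)
    (r R : ℝ) (har : ‖a‖ < r) (hrR : r < R) (hRR₀ : R < R₀) :
    ((P.filter fun x => ‖x‖ ≤ r).card : ℝ) *
        ((R - r) * (R - ‖a‖) / (R ^ 2 + r * ‖a‖)) ≤
      modCounting P a R - modCounting P a r := by
  have hr0 : 0 < r := lt_of_le_of_lt (norm_nonneg a) har
  have haR : ‖a‖ < R := har.trans hrR
  have hxa : ∀ x ∈ P, x ≠ a := fun x hxP h => haP (h ▸ hxP)
  set gR : ℂ → ℝ := fun x =>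
    Real.log ‖((R:ℂ)^2 - (starRingEnd ℂ) x * a)/((R:ℂ)*(a-x))‖ with hgR
  set gr : ℂ → ℝ := fun x =>
    Real.log ‖((r:ℂ)^2 - (starRingEnd ℂ) x * a)/((r:ℂ)*(a-x))‖ with hgr
  set Q := P.filter (fun x => ‖x‖ ≤ r) with hQdef
  -- split the R-disk filter
  have h1 : (P.filter fun x => ‖x‖ < R).filter (fun x => ‖x‖ ≤ r) = Q := by
    rw [Multiset.filter_filter]
    exact Multiset.filter_congr (fun x _ =>
      ⟨fun h => h.1, fun h => ⟨h, lt_of_le_of_lt h hrR⟩⟩)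
  have hsplitR : (P.filter fun x => ‖x‖ < R)
      = Q + ((P.filter fun x => ‖x‖ < R).filter fun x => ¬ ‖x‖ ≤ r) := by
    conv_lhs => rw [← Multiset.filter_add_not (fun x => ‖x‖ ≤ r)
      (P.filter fun x => ‖x‖ < R)]
    rw [h1]
  -- R side
  have hR_eq : modCounting P a R
      = (Q.map gR).sum
        + (((P.filter fun x => ‖x‖ < R).filter fun x => ¬ ‖x‖ ≤ r).map gR).sum := by
    conv_lhs => rw [modCounting, hsplitR, Multiset.map_add, Multiset.sum_add]
  have hE_nonneg :
      0 ≤ (((P.filter fun x => ‖x‖ < R).filter fun x => ¬ ‖x‖ ≤ r).map gR).sum := by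
    apply Multiset.sum_nonneg
    intro y hy
    obtain ⟨x, hx, rfl⟩ := Multiset.mem_map.1 hy
    obtain ⟨hx1, _⟩ := Multiset.mem_filter.1 hx
    obtain ⟨hxP, hxR⟩ := Multiset.mem_filter.1 hx1
    exact g_nonneg haR hxR (hxa x hxP)
  -- r side
  have h2 : Q.filter (fun x => ‖x‖ < r) = P.filter (fun x => ‖x‖ < r) := by
    rw [hQdef, Multiset.filter_filter]
    exact Multiset.filter_congr (fun x _ =>
      ⟨fun h => h.1, fun h => ⟨h, le_of_lt h⟩⟩)
  have hsplitr : Q = P.filter (fun x => ‖x‖ < r) + Q.filter (fun x => ¬ ‖x‖ < r) := by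
    conv_lhs => rw [← Multiset.filter_add_not (fun x => ‖x‖ < r) Q]
    rw [h2]
  have hr_eq : (Q.map gr).sum = modCounting P a r := by
    rw [modCounting]
    conv_lhs => rw [hsplitr, Multiset.map_add, Multiset.sum_add]
    have hz : ((Q.filter fun x => ¬ ‖x‖ < r).map gr).sum = 0 := by
      apply Multiset.sum_eq_zero
      intro y hy
      obtain ⟨x, hx, rfl⟩ := Multiset.mem_map.1 hy
      obtain ⟨hx1, hx2⟩ := Multiset.mem_filter.1 hx
      obtain ⟨hxP, hxr⟩ := Multiset.mem_filter.1 hx1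
      exact g_boundary hr0 (le_antisymm hxr (not_lt.1 hx2)) (hxa x hxP)
    rw [hz, add_zero]
  -- main bound on Q
  have hmain : (Q.card : ℝ) * ((R - r) * (R - ‖a‖) / (R ^ 2 + r * ‖a‖))
      ≤ (Q.map gR).sum - (Q.map gr).sum := by
    rw [← Multiset.sum_map_sub]
    have := Multiset.card_nsmul_le_sum (s := Q.map fun x => gR x - gr x)
      (a := (R - r) * (R - ‖a‖) / (R ^ 2 + r * ‖a‖)) ?_
    · rwa [Multiset.card_map, nsmul_eq_mul] at this
    · intro y hy
      obtain ⟨x, hx, rfl⟩ := Multiset.mem_map.1 hy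
      obtain ⟨hxP, hxr⟩ := Multiset.mem_filter.1 hx
      have h := key_ineq har hrR hxr (hxa x hxP)
      simpa [hgR, hgr, pow_two] using h
  rw [← hr_eq, hR_eq]
  linarith
end
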